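/- arXiv:2005.08611 — 6 statements merged into one kernel-verified Lean document; each statement's English description precedes it below -/
import Mathlib

section
/- Let (𝒵, μ) be a σ-finite measure space, let N ⊆ ℝ^d be open, and let f : ℝ^d × 𝒵 → [0,∞) be measurable such that for μ-a.e. z the map α ↦ f(α,z) is continuous on N. Let η₀ be a measure on ℝ^d with η₀(U) > 0 for every nonempty open U ⊆ N, and fix α_r ∈ N. Then there is no pair (s, c) of a measurable s : 𝒵 → ℝ satisfying the dominance condition on N (for every α ∈ N there is an open neighborhood Γ ⊆ N with z ↦ sup_{β∈Γ} f(β,z) measurable and ∫ |s(z)| sup_{β∈Γ} f(β,z) dμ(z) < ∞) and a constant c ∈ ℝ such that 1(α ≤ α_r) − c = ∫ s(z) f(α,z) dμ(z) for η₀-a.e. α ∈ N, where α ≤ α_r means componentwise inequality. -/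
open MeasureTheory Set
open scoped ENNReal

/-- Auxiliary density lemma: if `P` is open and contains `αr + t • v` for all small
`t > 0`, and `A` has null complement for a measure charging every nonempty open
subset of `N`, then `αr` is in the closure of `N ∩ P ∩ A`. -/
lemma closure_aux_stmt1 {d : ℕ} {N : Set (EuclideanSpace ℝ (Fin d))} (hN : IsOpen N)
    {αr : EuclideanSpace ℝ (Fin d)} (hαr : αr ∈ N)
    {P : Set (EuclideanSpace ℝ (Fin d))} (hP : IsOpen P)
    {v : EuclideanSpace ℝ (Fin d)} (hv : ∀ t : ℝ, 0 < t → αr + t • v ∈ P)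
    (η₀ : Measure (EuclideanSpace ℝ (Fin d)))
    (hη : ∀ U : Set (EuclideanSpace ℝ (Fin d)), IsOpen U → U.Nonempty → U ⊆ N → 0 < η₀ U)
    {A : Set (EuclideanSpace ℝ (Fin d))} (hA : η₀ Aᶜ = 0) :
    αr ∈ closure (N ∩ P ∩ A) := by
  rw [mem_closure_iff]
  intro o ho hoαr
  have hφ : Continuous fun t : ℝ => αr + t • v :=
    continuous_const.add (continuous_id.smul continuous_const)
  have h0 : (fun t : ℝ => αr + t • v) 0 ∈ o ∩ N := by
    simp only [zero_smul, add_zero]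
    exact ⟨hoαr, hαr⟩
  have hopen : IsOpen ((fun t : ℝ => αr + t • v) ⁻¹' (o ∩ N)) := (ho.inter hN).preimage hφ
  obtain ⟨ε, hε, hball⟩ := Metric.isOpen_iff.mp hopen 0 h0
  have ht : (ε / 2 : ℝ) ∈ Metric.ball (0 : ℝ) ε := by
    simp only [Metric.mem_ball, Real.dist_eq, sub_zero, abs_of_nonneg (half_pos hε).le]
    linarith
  have hβ := hball ht
  have hβP : αr + (ε / 2) • v ∈ P := hv _ (half_pos hε)
  have hVopen : IsOpen (o ∩ N ∩ P) := (ho.inter hN).inter hP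
  have hVne : (o ∩ N ∩ P).Nonempty := ⟨αr + (ε / 2) • v, ⟨hβ, hβP⟩⟩
  have hVsub : o ∩ N ∩ P ⊆ N := fun x hx => hx.1.2
  have hpos := hη _ hVopen hVne hVsub
  by_contra hempty
  rw [not_nonempty_iff_eq_empty] at hempty
  have hsub : o ∩ N ∩ P ⊆ Aᶜ := by
    intro x hx hxA
    have : x ∈ o ∩ (N ∩ P ∩ A) := ⟨hx.1.1, ⟨hx.1.2, hx.2⟩, hxA⟩
    rw [hempty] at this
    exact this
  exact absurd (le_antisymm (hA ▸ measure_mono hsub) zero_le) (ne_of_gt hpos)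

/-- The all-ones vector in `EuclideanSpace`. -/
def stmt1Ones (d : ℕ) : EuclideanSpace ℝ (Fin d) := WithLp.toLp 2 (fun _ => 1)

/-- irregularity of the CDF of nonparametric unobserved heterogeneity:
no influence function `s` satisfying the dominance condition can represent the
indicator `1(α ≤ α_r)` (up to a constant) as `∫ s z * f α z dμ` η₀-a.e. on `N`. -/
theorem stmt_1 {d : ℕ} (hd : 0 < d) {Z : Type*} [MeasurableSpace Z]
    (μ : Measure Z) [SigmaFinite μ]
    (N : Set (EuclideanSpace ℝ (Fin d))) (hN : IsOpen N)
    (f : EuclideanSpace ℝ (Fin d) → Z → ℝ)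
    (hf_meas : Measurable (Function.uncurry f))
    (hf_nonneg : ∀ α z, 0 ≤ f α z)
    (hf_cont : ∀ᵐ z ∂μ, ContinuousOn (fun α => f α z) N)
    (η₀ : Measure (EuclideanSpace ℝ (Fin d)))
    (hη : ∀ U : Set (EuclideanSpace ℝ (Fin d)), IsOpen U → U.Nonempty → U ⊆ N → 0 < η₀ U)
    (αr : EuclideanSpace ℝ (Fin d)) (hαr : αr ∈ N) :
    ¬ ∃ (s : Z → ℝ) (c : ℝ), Measurable s ∧
      (∀ α ∈ N, ∃ Γ : Set (EuclideanSpace ℝ (Fin d)),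
        IsOpen Γ ∧ α ∈ Γ ∧ Γ ⊆ N ∧
        Measurable (fun z => ⨆ β ∈ Γ, ENNReal.ofReal (f β z)) ∧
        ∫⁻ z, (‖s z‖₊ : ℝ≥0∞) * ⨆ β ∈ Γ, ENNReal.ofReal (f β z) ∂μ < ⊤) ∧
      (∀ᵐ α ∂η₀, α ∈ N →
        (if ∀ i, α i ≤ αr i then (1 : ℝ) else 0) - c = ∫ z, s z * f α z ∂μ) := by
  rintro ⟨s, c, hs, hdom, hae⟩
  -- the candidate representation functional
  set g : EuclideanSpace ℝ (Fin d) → ℝ := fun α => ∫ z, s z * f α z ∂μ with hg_def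
  -- Step 1: g is continuous on N
  have hg_cont : ∀ α₀ ∈ N, ContinuousAt g α₀ := by
    intro α₀ hα₀
    obtain ⟨Γ, hΓo, hα₀Γ, hΓN, hsup_meas, hfin⟩ := hdom α₀ hα₀
    set S : Z → ℝ≥0∞ := fun z => ⨆ β ∈ Γ, ENNReal.ofReal (f β z) with hS
    have hmeas_s : Measurable fun z => (‖s z‖₊ : ℝ≥0∞) * S z :=
      hs.nnnorm.coe_nnreal_ennreal.mul hsup_meas
    have hae_fin : ∀ᵐ z ∂μ, (‖s z‖₊ : ℝ≥0∞) * S z < ⊤ := ae_lt_top hmeas_s hfin.ne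
    have hFmeas : ∀ α : EuclideanSpace ℝ (Fin d), Measurable fun z => s z * f α z :=
      fun α => hs.mul (hf_meas.comp measurable_prodMk_left)
    refine continuousAt_of_dominated (bound := fun z => ‖s z‖ * (S z).toReal) ?_ ?_ ?_ ?_
    · exact Filter.Eventually.of_forall fun α => (hFmeas α).aestronglyMeasurable
    · refine Filter.eventually_of_mem (hΓo.mem_nhds hα₀Γ) fun α hαΓ => ?_
      refine hae_fin.mono fun z hz => ?_
      rcases eq_or_ne (s z) 0 with hsz | hsz
      · simp [hsz]
      · have hSne : S z ≠ ⊤ := by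
          intro hStop
          rw [hStop, ENNReal.mul_top (by simpa using hsz)] at hz
          exact absurd hz (lt_irrefl _)
        have hle : f α z ≤ (S z).toReal := by
          refine (ENNReal.ofReal_le_iff_le_toReal hSne).mp ?_
          exact le_biSup (fun β => ENNReal.ofReal (f β z)) hαΓ
        rw [norm_mul, Real.norm_of_nonneg (hf_nonneg α z)]
        exact mul_le_mul_of_nonneg_left hle (norm_nonneg _)
    · refine ⟨(hs.norm.mul hsup_meas.ennreal_toReal).aestronglyMeasurable, ?_⟩
      rw [hasFiniteIntegral_iff_norm]
      refine lt_of_le_of_lt (lintegral_mono fun z => ?_) hfin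
      rw [Real.norm_of_nonneg (mul_nonneg (norm_nonneg _) ENNReal.toReal_nonneg),
        ENNReal.ofReal_mul (norm_nonneg _), ofReal_norm, enorm_eq_nnnorm]
      exact mul_le_mul_right ENNReal.ofReal_toReal_le _
    · refine hf_cont.mono fun z hz => ?_
      exact continuousAt_const.mul (hz.continuousAt (hN.mem_nhds hα₀))
  -- Step 2: the set where the representation holds
  set A : Set (EuclideanSpace ℝ (Fin d)) :=
    {α | α ∈ N → (if ∀ i, α i ≤ αr i then (1 : ℝ) else 0) - c = g α} with hA_def
  have hA : η₀ Aᶜ = 0 := by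
    have := ae_iff.mp hae
    simpa [hA_def, compl_setOf] using this
  -- Step 3: approach αr from below: g αr = 1 - c
  have hones : ∀ (t : ℝ) (i : Fin d),
      (αr + t • stmt1Ones d) i = αr i + t := by
    intro t i
    show αr i + t * 1 = αr i + t
    ring
  have h1 : g αr = 1 - c := by
    have hP : IsOpen {α : EuclideanSpace ℝ (Fin d) | ∀ i, α i < αr i} := by
      have : {α : EuclideanSpace ℝ (Fin d) | ∀ i, α i < αr i}
          = ⋂ i, {α : EuclideanSpace ℝ (Fin d) | α i < αr i} := by
        ext x; simp
      rw [this]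
      exact isOpen_iInter_of_finite fun i =>
        isOpen_lt (EuclideanSpace.proj i).continuous continuous_const
    have hv : ∀ t : ℝ, 0 < t →
        αr + t • (-(stmt1Ones d))
          ∈ {α : EuclideanSpace ℝ (Fin d) | ∀ i, α i < αr i} := by
      intro t ht i
      show αr i + t * (-1) < αr i
      linarith
    have hcl := closure_aux_stmt1 hN hαr hP hv η₀ hη hA
    have hmem := (hg_cont αr hαr).continuousWithinAt.mem_closure_image hcl
    have himg : g '' (N ∩ {α : EuclideanSpace ℝ (Fin d) | ∀ i, α i < αr i} ∩ A)
        ⊆ {1 - c} := by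
      rintro _ ⟨a, ⟨⟨haN, haP⟩, haA⟩, rfl⟩
      have heq := haA haN
      rw [if_pos (fun i => (haP i).le)] at heq
      simp [← heq]
    have : g αr ∈ closure ({1 - c} : Set ℝ) := closure_mono himg hmem
    simpa using this
  -- Step 4: approach αr from above in the first coordinate: g αr = -c
  have h0 : g αr = 0 - c := by
    set i0 : Fin d := ⟨0, hd⟩ with hi0
    have hP : IsOpen {α : EuclideanSpace ℝ (Fin d) | αr i0 < α i0} :=
      isOpen_lt continuous_const (EuclideanSpace.proj i0).continuous
    have hv : ∀ t : ℝ, 0 < t →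
        αr + t • (stmt1Ones d)
          ∈ {α : EuclideanSpace ℝ (Fin d) | αr i0 < α i0} := by
      intro t ht
      show αr i0 < αr i0 + t * 1
      linarith
    have hcl := closure_aux_stmt1 hN hαr hP hv η₀ hη hA
    have hmem := (hg_cont αr hαr).continuousWithinAt.mem_closure_image hcl
    have himg : g '' (N ∩ {α : EuclideanSpace ℝ (Fin d) | αr i0 < α i0} ∩ A)
        ⊆ {0 - c} := by
      rintro _ ⟨a, ⟨⟨haN, haP⟩, haA⟩, rfl⟩
      have heq := haA haN
      rw [if_neg (by push_neg; exact ⟨i0, haP⟩)] at heq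
      simp [← heq]
    have : g αr ∈ closure ({0 - c} : Set ℝ) := closure_mono himg hmem
    simpa using this
  rw [h1] at h0
  norm_num at h0
end

section
/- Let (𝒵, μ) be a σ-finite measure space, let N ⊆ ℝ be open, and let f : ℝ × 𝒵 → [0,∞) be measurable such that for μ-a.e. z the map α ↦ f(α,z) is continuous on N. Let η₀ be a measure on ℝ with η₀(U) > 0 for every nonempty open U ⊆ N, fix q ∈ N, τ ∈ (0,1), and a constant D > 0. Then there is no pair (s, c) of a measurable s : 𝒵 → ℝ satisfying the dominance condition on N (for every α ∈ N there is an open neighborhood Γ ⊆ N with z ↦ sup_{β∈Γ} f(β,z) measurable and ∫ |s(z)| sup_{β∈Γ} f(β,z) dμ(z) < ∞) and a constant c ∈ ℝ such that −(1(α < q) − τ)/D − c = ∫ s(z) f(α,z) dμ(z) for η₀-a.e. α ∈ N. -/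
open MeasureTheory Set
open scoped ENNReal

/-- irregularity of quantiles of nonparametric unobserved heterogeneity:
no influence function `s` satisfying the dominance condition can represent the quantile
influence function `−(1(α < q) − τ)/D` (up to a constant) as `∫ s z * f α z dμ`
η₀-a.e. on `N`. -/
theorem stmt_2 {Z : Type*} [MeasurableSpace Z]
    (μ : Measure Z) [SigmaFinite μ]
    (N : Set ℝ) (hN : IsOpen N)
    (f : ℝ → Z → ℝ)
    (hf_meas : Measurable (Function.uncurry f))
    (hf_nonneg : ∀ α z, 0 ≤ f α z)
    (hf_cont : ∀ᵐ z ∂μ, ContinuousOn (fun α => f α z) N)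
    (η₀ : Measure ℝ)
    (hη : ∀ U : Set ℝ, IsOpen U → U.Nonempty → U ⊆ N → 0 < η₀ U)
    (q : ℝ) (hq : q ∈ N) (τ : ℝ) (hτ : τ ∈ Set.Ioo (0 : ℝ) 1) (D : ℝ) (hD : 0 < D) :
    ¬ ∃ (s : Z → ℝ) (c : ℝ), Measurable s ∧
      (∀ α ∈ N, ∃ Γ : Set ℝ,
        IsOpen Γ ∧ α ∈ Γ ∧ Γ ⊆ N ∧
        Measurable (fun z => ⨆ β ∈ Γ, ENNReal.ofReal (f β z)) ∧
        ∫⁻ z, (‖s z‖₊ : ℝ≥0∞) * ⨆ β ∈ Γ, ENNReal.ofReal (f β z) ∂μ < ⊤) ∧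
      (∀ᵐ α ∂η₀, α ∈ N →
        -((if α < q then (1 : ℝ) else 0) - τ) / D - c = ∫ z, s z * f α z ∂μ) := by
  rintro ⟨s, c, hs_meas, hdom, hae⟩
  set g : ℝ → ℝ := fun α => ∫ z, s z * f α z ∂μ with hg
  -- the set where the representation holds
  set A : Set ℝ := {α | α ∈ N → -((if α < q then (1 : ℝ) else 0) - τ) / D - c = g α}
    with hA
  have hAc : η₀ Aᶜ = 0 := hae
  -- A meets every nonempty open subset of N
  have hA_meets : ∀ U : Set ℝ, IsOpen U → U.Nonempty → U ⊆ N → (A ∩ U).Nonempty := by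
    intro U hUo hUne hUN
    by_contra h
    rw [Set.not_nonempty_iff_eq_empty] at h
    have hsub : U ⊆ Aᶜ := fun x hx => fun hxA =>
      Set.eq_empty_iff_forall_notMem.mp h x ⟨hxA, hx⟩
    exact absurd (measure_mono_null hsub hAc) (hη U hUo hUne hUN).ne'
  -- continuity of g at q via dominated convergence
  obtain ⟨Γ, hΓo, hqΓ, hΓN, hSmeas, hfin⟩ := hdom q hq
  set S : Z → ℝ≥0∞ := fun z => ⨆ β ∈ Γ, ENNReal.ofReal (f β z) with hSdef
  set bound : Z → ℝ := fun z => ((‖s z‖₊ : ℝ≥0∞) * S z).toReal with hbdef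
  have hmeas_prod : Measurable fun z => (‖s z‖₊ : ℝ≥0∞) * S z :=
    (hs_meas.nnnorm.coe_nnreal_ennreal).mul hSmeas
  have hbound_int : Integrable bound μ :=
    integrable_toReal_of_lintegral_ne_top hmeas_prod.aemeasurable hfin.ne
  have hae_lt : ∀ᵐ z ∂μ, (‖s z‖₊ : ℝ≥0∞) * S z < ⊤ := ae_lt_top hmeas_prod hfin.ne
  have hg_cont : ContinuousAt g q := by
    apply continuousAt_of_dominated (bound := bound)
    · exact Filter.Eventually.of_forall fun α =>
        (hs_meas.mul hf_meas.of_uncurry_left).aestronglyMeasurable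
    · filter_upwards [hΓo.mem_nhds hqΓ] with α hα
      filter_upwards [hae_lt] with z hz
      rcases eq_or_ne (s z) 0 with h0 | h0
      · simp [h0, hbdef, ENNReal.toReal_nonneg]
      · have hSne : S z ≠ ⊤ := by
          intro hS
          rw [hS, ENNReal.mul_top (by simpa using h0)] at hz
          exact (lt_irrefl _ hz)
        have hle : ENNReal.ofReal (f α z) ≤ S z :=
          le_biSup (fun β => ENNReal.ofReal (f β z)) hα
        have hle' : f α z ≤ (S z).toReal := by
          have := ENNReal.toReal_mono hSne hle
          rwa [ENNReal.toReal_ofReal (hf_nonneg α z)] at this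
        have hnorm : ‖s z * f α z‖ = ‖s z‖ * f α z := by
          rw [norm_mul, Real.norm_of_nonneg (hf_nonneg α z)]
        rw [hnorm, hbdef]
        calc ‖s z‖ * f α z ≤ ‖s z‖ * (S z).toReal :=
              mul_le_mul_of_nonneg_left hle' (norm_nonneg _)
          _ = ((‖s z‖₊ : ℝ≥0∞) * S z).toReal := by
              rw [ENNReal.toReal_mul]; simp [coe_nnnorm]
    · exact hbound_int
    · filter_upwards [hf_cont] with z hz
      exact continuousAt_const.mul (hz.continuousAt (hN.mem_nhds hq))
  -- an interval around q inside N
  obtain ⟨ε, hε, hball⟩ := Metric.isOpen_iff.mp hN q hq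
  rw [Real.ball_eq_Ioo] at hball
  -- key: if T ⊆ A ∩ N, g is constant k on T, and q is a cluster point of T, then g q = k
  have key : ∀ (T : Set ℝ) (k : ℝ), T ⊆ A → T ⊆ N →
      (∀ α ∈ T, -((if α < q then (1 : ℝ) else 0) - τ) / D - c = k) →
      (∀ o : Set ℝ, IsOpen o → q ∈ o → (o ∩ T).Nonempty) → g q = k := by
    intro T k hTA hTN hTk hdense
    have hne : (nhdsWithin q T).NeBot :=
      mem_closure_iff_nhdsWithin_neBot.mp
        (mem_closure_iff.mpr fun o ho hqo => hdense o ho hqo)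
    have h1 : Filter.Tendsto g (nhdsWithin q T) (nhds (g q)) :=
      hg_cont.tendsto.mono_left nhdsWithin_le_nhds
    have h2 : Filter.Tendsto g (nhdsWithin q T) (nhds k) := by
      apply Filter.Tendsto.congr' _ (tendsto_const_nhds : Filter.Tendsto (fun _ => k) _ _)
      filter_upwards [eventually_mem_nhdsWithin] with α hα
      exact ((hTA hα (hTN hα)).symm.trans (hTk α hα)).symm
    exact tendsto_nhds_unique h1 h2
  -- density of A near q, on each side
  have hdense_side : ∀ I : Set ℝ, IsOpen I →
      (∀ r, 0 < r → r ≤ ε → (I ∩ Ioo (q - r) (q + r)).Nonempty ∧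
        IsOpen (I ∩ Ioo (q - r) (q + r))) → True := fun _ _ _ => trivial
  -- left side
  have hleft : g q = -((1 : ℝ) - τ) / D - c := by
    apply key (A ∩ Ioo (q - ε) q) _ (Set.inter_subset_left)
    · intro α hα
      exact hball ⟨hα.2.1, lt_trans hα.2.2 (by linarith)⟩
    · intro α hα
      rw [if_pos hα.2.2]
    · intro o ho hqo
      obtain ⟨δ, hδ, hδb⟩ := Metric.isOpen_iff.mp ho q hqo
      rw [Real.ball_eq_Ioo] at hδb
      set r := min δ ε with hr
      have hr0 : 0 < r := lt_min hδ hε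
      have hrδ : r ≤ δ := min_le_left δ ε
      have hrε : r ≤ ε := min_le_right δ ε
      obtain ⟨x, hxA, hx⟩ := hA_meets (Ioo (q - r) q) isOpen_Ioo
        ⟨q - r / 2, by constructor <;> [linarith; linarith]⟩
        (fun y hy => hball ⟨lt_of_le_of_lt (by linarith : q - ε ≤ q - r) hy.1,
          lt_trans hy.2 (by linarith)⟩)
      refine ⟨x, hδb ⟨lt_of_le_of_lt (by linarith : q - δ ≤ q - r) hx.1,
        lt_trans hx.2 (by linarith)⟩, hxA, ⟨lt_of_le_of_lt (by linarith : q - ε ≤ q - r) hx.1, hx.2⟩⟩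
  -- right side
  have hright : g q = -((0 : ℝ) - τ) / D - c := by
    apply key (A ∩ Ioo q (q + ε)) _ (Set.inter_subset_left)
    · intro α hα
      exact hball ⟨lt_trans (by linarith) hα.2.1, hα.2.2⟩
    · intro α hα
      rw [if_neg (not_lt.mpr (le_of_lt hα.2.1))]
    · intro o ho hqo
      obtain ⟨δ, hδ, hδb⟩ := Metric.isOpen_iff.mp ho q hqo
      rw [Real.ball_eq_Ioo] at hδb
      set r := min δ ε with hr
      have hr0 : 0 < r := lt_min hδ hε
      have hrδ : r ≤ δ := min_le_left δ ε
      have hrε : r ≤ ε := min_le_right δ ε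
      obtain ⟨x, hxA, hx⟩ := hA_meets (Ioo q (q + r)) isOpen_Ioo
        ⟨q + r / 2, by constructor <;> [linarith; linarith]⟩
        (fun y hy => hball ⟨lt_trans (by linarith) hy.1,
          lt_of_lt_of_le hy.2 (by linarith : q + r ≤ q + ε)⟩)
      refine ⟨x, hδb ⟨lt_trans (by linarith) hx.1,
        lt_of_lt_of_le hx.2 (by linarith : q + r ≤ q + δ)⟩, hxA,
        ⟨hx.1, lt_of_lt_of_le hx.2 (by linarith : q + r ≤ q + ε)⟩⟩
  have : -((1 : ℝ) - τ) / D - c = -((0 : ℝ) - τ) / D - c := hleft ▸ hright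
  have h1 : -((1 : ℝ) - τ) / D = -((0 : ℝ) - τ) / D := by linarith
  rw [div_eq_div_iff hD.ne' hD.ne'] at h1
  · nlinarith [hD]
end

section
/- Let T ⊆ (0,∞) be convex with nonempty interior and define, for α = (α₁,α₂) ∈ ℝ × (0,∞) and (t₁,t₂) ∈ T², the density f_{z/α}(t₁,t₂) = α₂²(t₁t₂)^{−3/2} exp(−(α₁t₁ − α₂)²/(2t₁) − (α₁t₂ − α₂)²/(2t₂)). Let N ⊆ ℝ × (0,∞) be open, (α₁₀, α₂₀) ∈ N, and let η₀ be a measure on ℝ × (0,∞) with η₀(U) > 0 for every nonempty open U ⊆ N. Then there is no pair (s, c) of a measurable s : T² → ℝ satisfying the dominance condition on N (for every α ∈ N there is an open neighborhood Γ ⊆ N with ∫_{T²} |s(t₁,t₂)| sup_{β∈Γ} f_{z/β}(t₁,t₂) dt₁dt₂ < ∞) and a constant c ∈ ℝ such that 1(α₁ ≤ α₁₀)1(α₂ ≤ α₂₀) − c = ∫_{T²} s(t₁,t₂) f_{z/α}(t₁,t₂) dt₁dt₂ for η₀-a.e. α ∈ N. -/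
open MeasureTheory Set Real
open scoped ENNReal

noncomputable def fd (α t : ℝ × ℝ) : ℝ :=
  α.2 ^ 2 * ((t.1 * t.2) ^ (-(3 : ℝ) / 2)) *
    Real.exp (-(α.1 * t.1 - α.2) ^ 2 / (2 * t.1) - (α.1 * t.2 - α.2) ^ 2 / (2 * t.2))

lemma fd_meas (α : ℝ × ℝ) : Measurable fun t => fd α t := by
  unfold fd; fun_prop

lemma fd_cont (t : ℝ × ℝ) : Continuous fun α => fd α t := by
  unfold fd
  apply Continuous.mul
  · exact ((continuous_snd.pow 2).mul continuous_const)
  · apply Real.continuous_exp.comp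
    apply Continuous.sub
    · exact (((continuous_fst.mul continuous_const).sub continuous_snd).pow 2).neg.div_const _
    · exact (((continuous_fst.mul continuous_const).sub continuous_snd).pow 2).div_const _

lemma contF (T : Set ℝ) (hTm : MeasurableSet T) (hT : T ⊆ Set.Ioi 0)
    (s : ℝ → ℝ → ℝ) (hs : Measurable (Function.uncurry s))
    (Γ : Set (ℝ × ℝ)) (hΓo : IsOpen Γ) (α₀ : ℝ × ℝ) (hα₀ : α₀ ∈ Γ)
    (hdom : ∫⁻ t in T ×ˢ T, (‖s t.1 t.2‖₊ : ℝ≥0∞) *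
        ⨆ β ∈ Γ, ENNReal.ofReal (fd β t) ∂volume < ⊤) :
    ContinuousAt (fun α : ℝ × ℝ => ∫ t in T ×ˢ T, s t.1 t.2 * fd α t) α₀ := by
  have hsm : Measurable fun t : ℝ × ℝ => s t.1 t.2 := hs
  set S : (ℝ × ℝ) → ℝ≥0∞ := fun t => ⨆ β ∈ Γ, ENNReal.ofReal (fd β t) with hS
  obtain ⟨D, hDsub, hDcnt, hDdense⟩ :=
    (TopologicalSpace.IsSeparable.of_separableSpace Γ).exists_countable_dense_subset
  have hSD : ∀ t, S t = ⨆ β ∈ D, ENNReal.ofReal (fd β t) := by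
    intro t
    refine le_antisymm (iSup₂_le fun β hβ => ?_) (biSup_mono hDsub)
    have hcl : closure D ⊆ {x | ENNReal.ofReal (fd x t) ≤ ⨆ β ∈ D, ENNReal.ofReal (fd β t)} :=
      closure_minimal (fun x hx => le_iSup₂ (f := fun β _ => ENNReal.ofReal (fd β t)) x hx)
        (isClosed_le (ENNReal.continuous_ofReal.comp (fd_cont t)) continuous_const)
    exact hcl (hDdense hβ)
  have hSmeas : Measurable S := by
    have h : S = fun t => ⨆ β ∈ D, ENNReal.ofReal (fd β t) := funext hSD
    rw [h]
    exact Measurable.biSup _ hDcnt fun β _ => ENNReal.measurable_ofReal.comp (fd_meas β)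
  have hGmeas : Measurable fun t => (‖s t.1 t.2‖₊ : ℝ≥0∞) * S t :=
    (hsm.nnnorm.coe_nnreal_ennreal).mul hSmeas
  have hfin : ∀ᵐ t ∂(volume.restrict (T ×ˢ T)), (‖s t.1 t.2‖₊ : ℝ≥0∞) * S t < ⊤ :=
    ae_lt_top hGmeas hdom.ne
  have hmem : ∀ᵐ t ∂(volume.restrict (T ×ˢ T)), t ∈ T ×ˢ T := ae_restrict_mem (hTm.prod hTm)
  refine continuousAt_of_dominated (bound := fun t => ((‖s t.1 t.2‖₊ : ℝ≥0∞) * S t).toReal)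
    ?_ ?_ ?_ ?_
  · exact Filter.Eventually.of_forall fun x =>
      (hsm.mul (fd_meas x)).aestronglyMeasurable
  · filter_upwards [hΓo.mem_nhds hα₀] with x hx
    filter_upwards [hfin, hmem] with t hfint hmemt
    have ht1 : (0:ℝ) < t.1 := hT hmemt.1
    have ht2 : (0:ℝ) < t.2 := hT hmemt.2
    have hfd0 : 0 ≤ fd x t := by
      unfold fd
      have h1 : (0:ℝ) < (t.1 * t.2) ^ (-(3:ℝ)/2) := Real.rpow_pos_of_pos (mul_pos ht1 ht2) _
      exact mul_nonneg (mul_nonneg (sq_nonneg _) h1.le) (Real.exp_pos _).le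
    have h1 : ENNReal.ofReal (|s t.1 t.2| * fd x t) ≤ (‖s t.1 t.2‖₊ : ℝ≥0∞) * S t := by
      rw [ENNReal.ofReal_mul (abs_nonneg _)]
      gcongr
      · exact le_of_eq (Real.enorm_eq_ofReal_abs _).symm
      · exact le_iSup₂ (f := fun β _ => ENNReal.ofReal (fd β t)) x hx
    rw [Real.norm_eq_abs, abs_mul, abs_of_nonneg hfd0]
    exact (ENNReal.ofReal_le_iff_le_toReal hfint.ne).mp h1
  · exact integrable_toReal_of_lintegral_ne_top hGmeas.aemeasurable hdom.ne
  · exact Filter.Eventually.of_forall fun t => (continuous_const.mul (fd_cont t)).continuousAt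

theorem stmt_5 (T : Set ℝ) (hT : T ⊆ Set.Ioi 0) (hTconv : Convex ℝ T)
    (hTint : (interior T).Nonempty)
    (N : Set (ℝ × ℝ)) (hN : IsOpen N) (hNsub : N ⊆ Set.univ ×ˢ Set.Ioi 0)
    (α₁₀ α₂₀ : ℝ) (hα : (α₁₀, α₂₀) ∈ N)
    (η₀ : Measure (ℝ × ℝ))
    (hη : ∀ U : Set (ℝ × ℝ), IsOpen U → U.Nonempty → U ⊆ N → 0 < η₀ U) :
    ¬ ∃ (s : ℝ → ℝ → ℝ) (c : ℝ), Measurable (Function.uncurry s) ∧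
      (∀ α ∈ N, ∃ Γ : Set (ℝ × ℝ), IsOpen Γ ∧ α ∈ Γ ∧ Γ ⊆ N ∧
        ∫⁻ t in T ×ˢ T, (‖s t.1 t.2‖₊ : ℝ≥0∞) *
          ⨆ β ∈ Γ, ENNReal.ofReal (β.2 ^ 2 * ((t.1 * t.2) ^ (-(3 : ℝ) / 2)) *
            Real.exp (-(β.1 * t.1 - β.2) ^ 2 / (2 * t.1) -
              (β.1 * t.2 - β.2) ^ 2 / (2 * t.2))) ∂volume < ⊤) ∧
      (∀ᵐ α ∂η₀, α ∈ N →
        (if α.1 ≤ α₁₀ then (1 : ℝ) else 0) * (if α.2 ≤ α₂₀ then (1 : ℝ) else 0) - c =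
          ∫ t in T ×ˢ T, s t.1 t.2 *
            (α.2 ^ 2 * ((t.1 * t.2) ^ (-(3 : ℝ) / 2)) *
              Real.exp (-(α.1 * t.1 - α.2) ^ 2 / (2 * t.1) -
                (α.1 * t.2 - α.2) ^ 2 / (2 * t.2)))) := by
  rintro ⟨s, c, hs, hdom, hae⟩
  have hTm : MeasurableSet T := hTconv.ordConnected.measurableSet
  obtain ⟨Γ, hΓo, hΓmem, hΓsub, hΓdom⟩ := hdom (α₁₀, α₂₀) hα
  set F : ℝ × ℝ → ℝ := fun α => ∫ t in T ×ˢ T, s t.1 t.2 * fd α t with hF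
  have hcont : ContinuousAt F (α₁₀, α₂₀) :=
    contF T hTm hT s hs Γ hΓo _ hΓmem hΓdom
  rw [Metric.continuousAt_iff] at hcont
  obtain ⟨δ, hδ, hball⟩ := hcont (1/3) (by norm_num)
  obtain ⟨ρ, hρ, hρN⟩ := Metric.isOpen_iff.mp hN _ hα
  set m := min δ ρ with hm
  have hm0 : 0 < m := lt_min hδ hρ
  rw [ae_iff] at hae
  have key : ∀ U : Set (ℝ × ℝ), IsOpen U → U.Nonempty → U ⊆ Metric.ball (α₁₀, α₂₀) m →
      ∃ a ∈ U, (if a.1 ≤ α₁₀ then (1:ℝ) else 0) * (if a.2 ≤ α₂₀ then (1:ℝ) else 0) - c = F a := by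
    intro U hUo hUne hUb
    have hUN : U ⊆ N := fun x hx =>
      hρN (Metric.ball_subset_ball (min_le_right δ ρ) (hUb hx))
    by_contra hcon
    push_neg at hcon
    have hnull : η₀ U = 0 := by
      refine measure_mono_null (fun x hx => ?_) hae
      intro h
      exact hcon x hx (h (hUN hx))
    exact absurd hnull (hη U hUo hUne hUN).ne'
  -- point a (lower-left quadrant)
  obtain ⟨a, ⟨haball, ha1, ha2⟩, haeq⟩ := key
    (Metric.ball (α₁₀, α₂₀) m ∩ ({p : ℝ × ℝ | p.1 < α₁₀} ∩ {p : ℝ × ℝ | p.2 < α₂₀}))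
    (Metric.isOpen_ball.inter ((isOpen_lt continuous_fst continuous_const).inter
      (isOpen_lt continuous_snd continuous_const)))
    ⟨(α₁₀ - m/2, α₂₀ - m/2), by
      refine ⟨?_, by simp; linarith, by simp; linarith⟩
      rw [Metric.mem_ball, Prod.dist_eq]
      simp only [Real.dist_eq]
      rw [show α₁₀ - m/2 - α₁₀ = -(m/2) by ring, show α₂₀ - m/2 - α₂₀ = -(m/2) by ring,
        abs_neg, abs_of_nonneg (by linarith : (0:ℝ) ≤ m/2)]
      simpa using by linarith⟩
    Set.inter_subset_left
  -- point b (right side)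
  obtain ⟨b, ⟨hbball, hb1⟩, hbeq⟩ := key
    (Metric.ball (α₁₀, α₂₀) m ∩ {p : ℝ × ℝ | α₁₀ < p.1})
    (Metric.isOpen_ball.inter (isOpen_lt continuous_const continuous_fst))
    ⟨(α₁₀ + m/2, α₂₀), by
      refine ⟨?_, by simp; linarith⟩
      rw [Metric.mem_ball, Prod.dist_eq]
      simp only [Real.dist_eq]
      rw [show α₁₀ + m/2 - α₁₀ = m/2 by ring, show α₂₀ - α₂₀ = (0:ℝ) by ring,
        abs_of_nonneg (by linarith : (0:ℝ) ≤ m/2), abs_zero]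
      rw [max_eq_left (by linarith)]
      linarith⟩
    Set.inter_subset_left
  rw [if_pos ha1.le, if_pos ha2.le] at haeq
  rw [if_neg (not_le.mpr hb1)] at hbeq
  norm_num at haeq hbeq
  have hda : dist (F a) (F (α₁₀, α₂₀)) < 1/3 :=
    hball (lt_of_lt_of_le (Metric.mem_ball.mp haball) (min_le_left _ _))
  have hdb : dist (F b) (F (α₁₀, α₂₀)) < 1/3 :=
    hball (lt_of_lt_of_le (Metric.mem_ball.mp hbball) (min_le_left _ _))
  rw [Real.dist_eq] at hda hdb
  rw [← haeq] at hda
  rw [← hbeq] at hdb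
  have h1 := abs_lt.mp hda
  have h2 := abs_lt.mp hdb
  linarith [h1.1, h1.2, h2.1, h2.2]
end

section
/- Let d ≥ 2, let σ be the rotation-invariant (uniform spherical) probability measure on the unit sphere S^{d−1} ⊆ ℝ^d, let ν be a finite measure on S^{d−1} that is absolutely continuous with respect to σ, and let s ∈ L¹(ν). Then the map b(α) = ∫_{S^{d−1}} 1(⟨x,α⟩ ≥ 0) s(x) dν(x) is continuous on S^{d−1}, and hence uniformly continuous by compactness of S^{d−1}. -/
open MeasureTheory Set
open scoped RealInnerProductSpace Topology
open Filter

section aux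

variable {d : ℕ}

private noncomputable def rotAux (j p : Fin d) (θ : ℝ)
    (x : EuclideanSpace ℝ (Fin d)) : EuclideanSpace ℝ (Fin d) :=
  WithLp.toLp 2 (fun i => if i = j then Real.cos θ * x j - Real.sin θ * x p
    else if i = p then Real.sin θ * x j + Real.cos θ * x p else x i)

private lemma rotAux_j (j p : Fin d) (θ : ℝ) (x : EuclideanSpace ℝ (Fin d)) :
    rotAux j p θ x j = Real.cos θ * x j - Real.sin θ * x p := by
  simp [rotAux]

private lemma rotAux_p {j p : Fin d} (h : j ≠ p) (θ : ℝ) (x : EuclideanSpace ℝ (Fin d)) :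
    rotAux j p θ x p = Real.sin θ * x j + Real.cos θ * x p := by
  simp [rotAux, Ne.symm h]

private lemma rotAux_other {j p i : Fin d} (hij : i ≠ j) (hip : i ≠ p) (θ : ℝ)
    (x : EuclideanSpace ℝ (Fin d)) : rotAux j p θ x i = x i := by
  simp [rotAux, hij, hip]

private lemma rotAux_inv {j p : Fin d} (h : j ≠ p) (θ : ℝ) (x : EuclideanSpace ℝ (Fin d)) :
    rotAux j p (-θ) (rotAux j p θ x) = x := by
  ext i
  by_cases hij : i = j
  · subst hij
    rw [rotAux_j, rotAux_j, rotAux_p h, Real.cos_neg, Real.sin_neg]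
    linear_combination x i * Real.sin_sq_add_cos_sq θ
  · by_cases hip : i = p
    · subst hip
      rw [rotAux_p h, rotAux_j, rotAux_p h, Real.cos_neg, Real.sin_neg]
      linear_combination x i * Real.sin_sq_add_cos_sq θ
    · rw [rotAux_other hij hip, rotAux_other hij hip]

private noncomputable def rot (j p : Fin d) (h : j ≠ p) (θ : ℝ) :
    EuclideanSpace ℝ (Fin d) ≃ₗᵢ[ℝ] EuclideanSpace ℝ (Fin d) where
  toLinearEquiv :=
    { toFun := rotAux j p θ
      invFun := rotAux j p (-θ)
      map_add' := by
        intro x y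
        ext i
        by_cases hij : i = j
        · subst hij
          simp only [PiLp.add_apply, rotAux_j]
          ring
        · by_cases hip : i = p
          · subst hip
            simp only [PiLp.add_apply, rotAux_p h]
            ring
          · simp only [PiLp.add_apply, rotAux_other hij hip]
      map_smul' := by
        intro c x
        ext i
        by_cases hij : i = j
        · subst hij
          simp only [PiLp.smul_apply, rotAux_j, smul_eq_mul, RingHom.id_apply]
          ring
        · by_cases hip : i = p
          · subst hip
            simp only [PiLp.smul_apply, rotAux_p h, smul_eq_mul, RingHom.id_apply]
            ring
          · simp only [PiLp.smul_apply, rotAux_other hij hip, smul_eq_mul, RingHom.id_apply]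
      left_inv := by
        intro x
        show rotAux j p (-θ) (rotAux j p θ x) = x
        exact rotAux_inv h θ x
      right_inv := by
        intro x
        show rotAux j p θ (rotAux j p (-θ) x) = x
        have := rotAux_inv h (-θ) x
        rwa [neg_neg] at this
 }
  norm_map' := by
    intro x
    show ‖(rotAux j p θ x : EuclideanSpace ℝ (Fin d))‖ = ‖x‖
    rw [EuclideanSpace.norm_eq, EuclideanSpace.norm_eq]
    congr 1
    have hmemp : p ∈ Finset.univ.erase j := Finset.mem_erase.2 ⟨Ne.symm h, Finset.mem_univ p⟩
    have key : ∀ g : Fin d → ℝ,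
        ∑ i, g i = g j + (g p + ∑ i ∈ (Finset.univ.erase j).erase p, g i) := by
      intro g
      rw [← Finset.add_sum_erase _ g (Finset.mem_univ j), ← Finset.add_sum_erase _ g hmemp]
    rw [key (fun i => ‖(rotAux j p θ x : EuclideanSpace ℝ (Fin d)) i‖ ^ 2),
      key (fun i => ‖x i‖ ^ 2)]
    have hsum : ∑ i ∈ (Finset.univ.erase j).erase p,
        ‖(rotAux j p θ x : EuclideanSpace ℝ (Fin d)) i‖ ^ 2
        = ∑ i ∈ (Finset.univ.erase j).erase p, ‖x i‖ ^ 2 := by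
      apply Finset.sum_congr rfl
      intro i hi
      have hip : i ≠ p := (Finset.mem_erase.1 hi).1
      have hij : i ≠ j := (Finset.mem_erase.1 (Finset.mem_erase.1 hi).2).1
      rw [rotAux_other hij hip]
    rw [hsum, rotAux_j, rotAux_p h]
    simp only [Real.norm_eq_abs, sq_abs]
    nlinarith [Real.sin_sq_add_cos_sq θ]

private lemma rot_apply (j p : Fin d) (h : j ≠ p) (θ : ℝ) (x : EuclideanSpace ℝ (Fin d)) :
    (rot j p h θ) x = rotAux j p θ x := rfl

end aux

section nullsets

variable {d : ℕ} (σ : Measure (EuclideanSpace ℝ (Fin d))) [IsProbabilityMeasure σ]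

private lemma measurable_W (k : ℕ) :
    MeasurableSet {x : EuclideanSpace ℝ (Fin d) | ∀ i : Fin d, (i : ℕ) < k → x i = 0} := by
  have : {x : EuclideanSpace ℝ (Fin d) | ∀ i : Fin d, (i : ℕ) < k → x i = 0}
      = ⋂ i : Fin d, {x : EuclideanSpace ℝ (Fin d) | (i : ℕ) < k → x i = 0} := by
    ext x; simp [mem_iInter]
  rw [this]
  apply MeasurableSet.iInter
  intro i
  by_cases hik : (i : ℕ) < k
  · have : {x : EuclideanSpace ℝ (Fin d) | (i : ℕ) < k → x i = 0}
        = (EuclideanSpace.proj (𝕜 := ℝ) i) ⁻¹' {0} := by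
      ext x; simp [hik]
    rw [this]
    exact (EuclideanSpace.proj (𝕜 := ℝ) i).continuous.measurable (measurableSet_singleton 0)
  · have : {x : EuclideanSpace ℝ (Fin d) | (i : ℕ) < k → x i = 0} = univ := by
      ext x; simp [hik]
    rw [this]; exact MeasurableSet.univ

private lemma coord_null
    (hσsphere : σ (Metric.sphere (0 : EuclideanSpace ℝ (Fin d)) 1)ᶜ = 0)
    (hσinv : ∀ R : EuclideanSpace ℝ (Fin d) ≃ₗᵢ[ℝ] EuclideanSpace ℝ (Fin d),
      Measure.map R σ = σ) :
    ∀ m : ℕ, m < d →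
      σ {x : EuclideanSpace ℝ (Fin d) | ∀ i : Fin d, (i : ℕ) < d - m → x i = 0} = 0 := by
  intro m
  induction m with
  | zero =>
    intro _
    refine measure_mono_null ?_ hσsphere
    intro x hx
    have hx0 : x = 0 := by
      ext i
      exact hx i i.isLt
    simp [hx0]
  | succ m ih =>
    intro hmd
    have hm : m < d := Nat.lt_of_succ_lt hmd
    set k : ℕ := d - (m + 1) with hk
    have hk1 : 1 ≤ k := by omega
    have hkd : k < d := by omega
    have hkm : d - m = k + 1 := by omega
    have hprev : σ {x : EuclideanSpace ℝ (Fin d) | ∀ i : Fin d, (i : ℕ) < k + 1 → x i = 0}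
        = 0 := by
      rw [← hkm]; exact ih hm
    -- coordinates k-1 and k
    have hk1d : k - 1 < d := by omega
    set j : Fin d := ⟨k - 1, hk1d⟩ with hj
    set p : Fin d := ⟨k, hkd⟩ with hp
    have hjp : j ≠ p := by
      simp only [hj, hp, Ne, Fin.mk.injEq]
      omega
    set W : Set (EuclideanSpace ℝ (Fin d)) :=
      {x : EuclideanSpace ℝ (Fin d) | ∀ i : Fin d, (i : ℕ) < k → x i = 0} with hW
    set V : ℕ → Set (EuclideanSpace ℝ (Fin d)) :=
      fun n => (rot j p hjp (Real.arctan n)) ⁻¹' W with hV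
    have hVmeas : ∀ n, MeasurableSet (V n) := by
      intro n
      exact (rot j p hjp (Real.arctan n)).continuous.measurable (measurable_W k)
    have hVσ : ∀ n, σ (V n) = σ W := by
      intro n
      rw [hV]
      have := hσinv (rot j p hjp (Real.arctan n))
      conv_rhs => rw [← this]
      rw [Measure.map_apply (rot j p hjp (Real.arctan n)).continuous.measurable
        (measurable_W k)]
    -- characterize membership in V n
    have hVmem : ∀ n (x : EuclideanSpace ℝ (Fin d)), x ∈ V n ↔
        ((∀ i : Fin d, (i : ℕ) < k - 1 → x i = 0) ∧
          Real.cos (Real.arctan n) * x j - Real.sin (Real.arctan n) * x p = 0) := by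
      intro n x
      rw [hV]
      simp only [mem_preimage, rot_apply, hW, mem_setOf_eq]
      constructor
      · intro hx
        constructor
        · intro i hi
          have hij : i ≠ j := by simp only [hj, Ne, Fin.ext_iff]; omega
          have hip : i ≠ p := by simp only [hp, Ne, Fin.ext_iff]; omega
          have := hx i (by omega : (i : ℕ) < k)
          rwa [rotAux_other hij hip] at this
        · have := hx j (by simp only [hj]; omega : (j : ℕ) < k)
          rwa [rotAux_j] at this
      · rintro ⟨h1, h2⟩
        intro i hi
        by_cases hij : i = j
        · subst hij; rwa [rotAux_j]
        · have hip : i ≠ p := by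
            simp only [hp, Ne, Fin.ext_iff]
            simp only [hj, Ne, Fin.ext_iff] at hij
            omega
          rw [rotAux_other hij hip]
          apply h1
          simp only [hj, Ne, Fin.ext_iff] at hij
          omega
    -- pairwise a.e. disjoint
    have hdisj : Pairwise (Function.onFun (AEDisjoint σ) V) := by
      intro n m' hnm
      refine measure_mono_null ?_ hprev
      rintro x ⟨hxn, hxm⟩
      obtain ⟨h1, h2⟩ := (hVmem n x).1 hxn
      obtain ⟨_, h3⟩ := (hVmem m' x).1 hxm
      have hcosn := Real.cos_arctan_pos (n : ℝ)
      have hcosm := Real.cos_arctan_pos (m' : ℝ)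
      have htn : Real.sin (Real.arctan n) = n * Real.cos (Real.arctan n) := by
        have := Real.tan_arctan (n : ℝ)
        rw [Real.tan_eq_sin_div_cos] at this
        field_simp at this
        linarith [this]
      have htm : Real.sin (Real.arctan m') = m' * Real.cos (Real.arctan m') := by
        have := Real.tan_arctan (m' : ℝ)
        rw [Real.tan_eq_sin_div_cos] at this
        field_simp at this
        linarith [this]
      -- deduce x j = x p = 0
      have hxj : x j = n * x p := by
        rw [htn] at h2; nlinarith [h2, hcosn]
      have hxj' : x j = m' * x p := by
        rw [htm] at h3; nlinarith [h3, hcosm]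
      have hxp : x p = 0 := by
        have hne : (n : ℝ) ≠ (m' : ℝ) := by exact_mod_cast hnm
        have : ((n : ℝ) - m') * x p = 0 := by linarith
        rcases mul_eq_zero.1 this with h | h
        · exact absurd (by linarith : (n : ℝ) = m') hne
        · exact h
      have hxj0 : x j = 0 := by rw [hxj, hxp, mul_zero]
      intro i hi
      by_cases hij : i = j
      · subst hij; exact hxj0
      · by_cases hip : i = p
        · subst hip; exact hxp
        · apply h1
          simp only [hj, Ne, Fin.ext_iff] at hij
          simp only [hp, Ne, Fin.ext_iff] at hip
          omega
    -- sum of measures is finite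
    have hsum : ∑' n : ℕ, σ (V n) = σ (⋃ n, V n) :=
      (measure_iUnion₀ hdisj fun n => (hVmeas n).nullMeasurableSet).symm
    by_contra hW0
    have : ∑' _ : ℕ, σ W = ⊤ := ENNReal.tsum_const_eq_top_of_ne_zero hW0
    have h1 : ∑' n : ℕ, σ (V n) = ⊤ := by
      rw [tsum_congr hVσ, this]
    rw [hsum] at h1
    exact (measure_lt_top σ _).ne h1

private lemma hyperplane_null
    (hd : 2 ≤ d)
    (hσsphere : σ (Metric.sphere (0 : EuclideanSpace ℝ (Fin d)) 1)ᶜ = 0)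
    (hσinv : ∀ R : EuclideanSpace ℝ (Fin d) ≃ₗᵢ[ℝ] EuclideanSpace ℝ (Fin d),
      Measure.map R σ = σ)
    (α : EuclideanSpace ℝ (Fin d)) (hα : ‖α‖ = 1) :
    σ {x : EuclideanSpace ℝ (Fin d) | ⟪x, α⟫ = 0} = 0 := by
  have hd0 : 0 < d := by omega
  set i0 : Fin d := ⟨0, hd0⟩ with hi0
  set e : EuclideanSpace ℝ (Fin d) := EuclideanSpace.single i0 (1 : ℝ) with he
  have hnorm : ‖α‖ = ‖e‖ := by
    rw [hα, he, EuclideanSpace.norm_single]; norm_num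
  set R := Submodule.reflection (𝕜 := ℝ) (ℝ ∙ (α - e))ᗮ with hR
  have hRα : R α = e := Submodule.reflection_sub hnorm
  set A : Set (EuclideanSpace ℝ (Fin d)) := {y : EuclideanSpace ℝ (Fin d) | y i0 = 0} with hA
  have hAW : A = {x : EuclideanSpace ℝ (Fin d) | ∀ i : Fin d, (i : ℕ) < 1 → x i = 0} := by
    ext y
    simp only [hA, mem_setOf_eq]
    constructor
    · intro h i hi
      have : i = i0 := by
        apply Fin.ext
        simpa [hi0] using Nat.lt_one_iff.1 hi
      rwa [this]
    · intro h
      exact h i0 (by simp [hi0])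
  have hAnull : σ A = 0 := by
    rw [hAW]
    have h1 := coord_null σ hσsphere hσinv (d - 1) (by omega)
    have hdd : d - (d - 1) = 1 := by omega
    rwa [hdd] at h1
  have hAmeas : MeasurableSet A := by rw [hAW]; exact measurable_W 1
  have hset : {x : EuclideanSpace ℝ (Fin d) | ⟪x, α⟫ = 0} = R ⁻¹' A := by
    ext x
    simp only [mem_setOf_eq, mem_preimage, hA]
    have hinner : ⟪R x, e⟫ = ⟪x, α⟫ := by
      rw [← hRα, LinearIsometryEquiv.inner_map_map]
    have hsingle : ⟪R x, e⟫ = (R x) i0 := by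
      rw [he, EuclideanSpace.inner_single_right]
      simp
    rw [← hsingle, hinner]
  rw [hset, ← Measure.map_apply R.continuous.measurable hAmeas, hσinv R, hAnull]

end nullsets

/-- binary choice random coefficient model: if `ν ≪ σ` (σ the rotation-invariant
probability measure on the sphere) and `s ∈ L¹(ν)`, then
`b(α) = ∫ 1(⟨x,α⟩ ≥ 0) s(x) dν(x)` is continuous, hence uniformly continuous, on the sphere. -/
theorem stmt_6 {d : ℕ} (hd : 2 ≤ d)
    (σ : Measure (EuclideanSpace ℝ (Fin d))) [IsProbabilityMeasure σ]
    (hσsphere : σ (Metric.sphere (0 : EuclideanSpace ℝ (Fin d)) 1)ᶜ = 0)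
    (hσinv : ∀ R : EuclideanSpace ℝ (Fin d) ≃ₗᵢ[ℝ] EuclideanSpace ℝ (Fin d),
      Measure.map R σ = σ)
    (ν : Measure (EuclideanSpace ℝ (Fin d))) [IsFiniteMeasure ν]
    (hνσ : ν ≪ σ)
    (s : EuclideanSpace ℝ (Fin d) → ℝ) (hs : Integrable s ν) :
    ContinuousOn (fun α => ∫ x, (if 0 ≤ ⟪x, α⟫ then s x else 0) ∂ν)
      (Metric.sphere (0 : EuclideanSpace ℝ (Fin d)) 1) ∧
    UniformContinuousOn (fun α => ∫ x, (if 0 ≤ ⟪x, α⟫ then s x else 0) ∂ν)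
      (Metric.sphere (0 : EuclideanSpace ℝ (Fin d)) 1) := by
  have hcont : ContinuousOn (fun α => ∫ x, (if 0 ≤ ⟪x, α⟫ then s x else 0) ∂ν)
      (Metric.sphere (0 : EuclideanSpace ℝ (Fin d)) 1) := by
    intro α₀ hα₀
    have hα₀n : ‖α₀‖ = 1 := by rwa [mem_sphere_zero_iff_norm] at hα₀
    have hplane : ν {x : EuclideanSpace ℝ (Fin d) | ⟪x, α₀⟫ = 0} = 0 :=
      hνσ (hyperplane_null σ hd hσsphere hσinv α₀ hα₀n)
    have hmeas : ∀ α : EuclideanSpace ℝ (Fin d),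
        AEStronglyMeasurable (fun x => if 0 ≤ ⟪x, α⟫ then s x else 0) ν := by
      intro α
      have hsetm : MeasurableSet {x : EuclideanSpace ℝ (Fin d) | 0 ≤ ⟪x, α⟫} :=
        measurableSet_le measurable_const
          (continuous_id.inner continuous_const).measurable
      have heq : (fun x => if 0 ≤ ⟪x, α⟫ then s x else 0)
          = {x : EuclideanSpace ℝ (Fin d) | 0 ≤ ⟪x, α⟫}.indicator s := by
        funext x; simp [Set.indicator_apply]
      rw [heq]
      exact hs.aestronglyMeasurable.indicator hsetm
    refine tendsto_integral_filter_of_dominated_convergence (fun x => |s x|)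
      (Filter.Eventually.of_forall fun α => hmeas α)
      (Filter.Eventually.of_forall fun α => ae_of_all ν fun x => ?_) hs.abs ?_
    · by_cases hxα : 0 ≤ ⟪x, α⟫
      · rw [if_pos hxα]; simp [Real.norm_eq_abs]
      · rw [if_neg hxα]; simp [abs_nonneg]
    · have hae : ∀ᵐ x ∂ν, ⟪x, α₀⟫ ≠ 0 := by
        rw [ae_iff]
        have : {x : EuclideanSpace ℝ (Fin d) | ¬⟪x, α₀⟫ ≠ 0}
            = {x : EuclideanSpace ℝ (Fin d) | ⟪x, α₀⟫ = 0} := by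
          ext x; simp
        rw [this]
        exact hplane
      filter_upwards [hae] with x hx
      have hco : ContinuousAt (fun α : EuclideanSpace ℝ (Fin d) => ⟪x, α⟫) α₀ :=
        (continuous_const.inner continuous_id).continuousAt
      rcases hx.lt_or_gt with hneg | hpos
      · have hev : ∀ᶠ α in 𝓝 α₀, ⟪x, α⟫ < 0 := hco.eventually_lt_const hneg
        have heq : ∀ᶠ α in 𝓝[Metric.sphere (0 : EuclideanSpace ℝ (Fin d)) 1] α₀,
            (if 0 ≤ ⟪x, α⟫ then s x else 0) = (if 0 ≤ ⟪x, α₀⟫ then s x else 0) := by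
          filter_upwards [nhdsWithin_le_nhds hev] with α hα
          rw [if_neg (not_le.2 hα), if_neg (not_le.2 hneg)]
        exact tendsto_const_nhds.congr' (Filter.EventuallyEq.symm heq)
      · have hev : ∀ᶠ α in 𝓝 α₀, 0 < ⟪x, α⟫ := hco.eventually_const_lt hpos
        have heq : ∀ᶠ α in 𝓝[Metric.sphere (0 : EuclideanSpace ℝ (Fin d)) 1] α₀,
            (if 0 ≤ ⟪x, α⟫ then s x else 0) = (if 0 ≤ ⟪x, α₀⟫ then s x else 0) := by
          filter_upwards [nhdsWithin_le_nhds hev] with α hα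
          rw [if_pos hα.le, if_pos hpos.le]
        exact tendsto_const_nhds.congr' (Filter.EventuallyEq.symm heq)
  exact ⟨hcont, (isCompact_sphere 0 1).uniformContinuousOn_of_continuous hcont⟩
end

section
/- Let d ≥ 2, let σ be the uniform spherical probability measure on S^{d−1}, let ν be a finite measure on S^{d−1} absolutely continuous with respect to σ, and let s ∈ L¹(ν). Let η₀ be a measure on S^{d−1}, let B ⊆ S^{d−1} be Borel, and suppose there exists β ∈ S^{d−1} such that for every open neighborhood U of β in S^{d−1} one has η₀(U ∩ B) > 0 and η₀(U \ B) > 0. Then there is no constant c ∈ ℝ such that ∫_{S^{d−1}} 1(⟨x,α⟩ ≥ 0) s(x) dν(x) = 1_B(α) − c for η₀-a.e. α ∈ S^{d−1}. -/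
open MeasureTheory Set
open scoped RealInnerProductSpace ENNReal

namespace Stmt8Aux

variable {d : ℕ}

def Zs (d k : ℕ) : Set (EuclideanSpace ℝ (Fin d)) :=
  {x | ∀ i : Fin d, (i : ℕ) < k → x i = 0}

lemma contCoord (i : Fin d) : Continuous fun x : EuclideanSpace ℝ (Fin d) => x i := by
  have : (fun x : EuclideanSpace ℝ (Fin d) => x i)
      = fun x => ⟪x, EuclideanSpace.single i (1:ℝ)⟫ := by
    ext x
    simp [EuclideanSpace.inner_single_right]
  rw [this]
  exact Continuous.inner continuous_id continuous_const

lemma isClosed_Zs (k : ℕ) : IsClosed (Zs d k) := by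
  have : Zs d k = ⋂ (i : Fin d), ⋂ (_ : (i : ℕ) < k), {x : EuclideanSpace ℝ (Fin d) | x i = 0} := by
    ext x; simp [Zs]
  rw [this]
  exact isClosed_iInter fun i => isClosed_iInter fun _ => isClosed_eq (contCoord i) continuous_const

lemma inner_reflection (K : Submodule ℝ (EuclideanSpace ℝ (Fin d))) [K.HasOrthogonalProjection]
    (x y : EuclideanSpace ℝ (Fin d)) : ⟪Submodule.reflection K x, y⟫ = ⟪x, Submodule.reflection K y⟫ := by
  conv_lhs => rw [← Submodule.reflection_reflection K y]
  exact (Submodule.reflection K).inner_map_map x (Submodule.reflection K y)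

lemma Zs_step (σ : Measure (EuclideanSpace ℝ (Fin d))) [IsProbabilityMeasure σ]
    (hσinv : ∀ R : EuclideanSpace ℝ (Fin d) ≃ₗᵢ[ℝ] EuclideanSpace ℝ (Fin d),
      Measure.map R σ = σ)
    {k : ℕ} (hk1 : 1 ≤ k) (hkd : k < d) :
    σ (Zs d k) = σ (Zs d (k + 1)) := by
  have hmap : ∀ (R : EuclideanSpace ℝ (Fin d) ≃ₗᵢ[ℝ] EuclideanSpace ℝ (Fin d))
      (S : Set (EuclideanSpace ℝ (Fin d))), MeasurableSet S → σ S = σ (R ⁻¹' S) := by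
    intro R S hS
    conv_lhs => rw [← hσinv R]
    exact Measure.map_apply R.continuous.measurable hS
  set a : Fin d := ⟨k - 1, by omega⟩ with ha
  set b : Fin d := ⟨k, hkd⟩ with hb
  have hab : a ≠ b := by simp [ha, hb, Fin.ext_iff]; omega
  set ea : EuclideanSpace ℝ (Fin d) := EuclideanSpace.single a (1:ℝ) with hea
  -- the rotated unit vectors
  set c : ℕ → ℝ := fun n => (Real.sqrt (1 + (n:ℝ)^2))⁻¹ with hc
  have hsq : ∀ n : ℕ, (0:ℝ) < Real.sqrt (1 + (n:ℝ)^2) := by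
    intro n
    apply Real.sqrt_pos.2
    positivity
  have hcpos : ∀ n : ℕ, 0 < c n := fun n => inv_pos.2 (hsq n)
  set w : ℕ → EuclideanSpace ℝ (Fin d) := fun n =>
    c n • (EuclideanSpace.single a (1:ℝ) + (n:ℝ) • EuclideanSpace.single b (1:ℝ)) with hw
  have hinner_w : ∀ (n : ℕ) (x : EuclideanSpace ℝ (Fin d)),
      ⟪x, w n⟫ = c n * (x a + (n:ℝ) * x b) := by
    intro n x
    rw [hw]
    simp [real_inner_smul_right, inner_add_right, EuclideanSpace.inner_single_right,
      real_inner_smul_right]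
    ring
  have hnorm_w : ∀ n : ℕ, ‖w n‖ = 1 := by
    intro n
    have hsum : ‖EuclideanSpace.single a (1:ℝ) + (n:ℝ) • EuclideanSpace.single b (1:ℝ)‖^2
        = 1 + (n:ℝ)^2 := by
      rw [norm_add_sq_real]
      have h1 : ⟪EuclideanSpace.single a (1:ℝ), (n:ℝ) • EuclideanSpace.single b (1:ℝ)⟫ = 0 := by
        simp [real_inner_smul_right, EuclideanSpace.inner_single_right,
          EuclideanSpace.single_apply, hab.symm]
      rw [h1]
      rw [norm_smul]
      simp [mul_pow]
    have hpos : (0:ℝ) ≤ 1 + (n:ℝ)^2 := by positivity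
    have hn : ‖EuclideanSpace.single a (1:ℝ) + (n:ℝ) • EuclideanSpace.single b (1:ℝ)‖
        = Real.sqrt (1 + (n:ℝ)^2) := by
      rw [← hsum, Real.sqrt_sq (norm_nonneg _)]
    rw [hw, norm_smul, hn, Real.norm_eq_abs, abs_of_pos (hcpos n), hc]
    exact inv_mul_cancel₀ (ne_of_gt (hsq n))
  -- the reflections carrying `ea` to `w n`
  set R : ℕ → (EuclideanSpace ℝ (Fin d) ≃ₗᵢ[ℝ] EuclideanSpace ℝ (Fin d)) := fun n =>
    Submodule.reflection (ℝ ∙ (ea - w n))ᗮ with hR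
  have hRea : ∀ n, R n ea = w n := by
    intro n
    apply Submodule.reflection_sub
    rw [hea, EuclideanSpace.norm_single, hnorm_w n]
    simp
  have hRw : ∀ n, R n (w n) = ea := by
    intro n
    rw [← hRea n, hR]
    exact Submodule.reflection_reflection _ _
  have hRfix : ∀ (n : ℕ) (i : Fin d), i ≠ a → i ≠ b →
      R n (EuclideanSpace.single i (1:ℝ)) = EuclideanSpace.single i (1:ℝ) := by
    intro n i hia hib
    apply Submodule.reflection_mem_subspace_eq_self
    rw [Submodule.mem_orthogonal_singleton_iff_inner_left]
    rw [inner_sub_right, hinner_w]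
    simp [hea, EuclideanSpace.inner_single_right, EuclideanSpace.single_apply,
      Ne.symm hia, Ne.symm hib]
  -- the sets
  set A : ℕ → Set (EuclideanSpace ℝ (Fin d)) := fun n =>
    {x | (∀ i : Fin d, (i : ℕ) < k - 1 → x i = 0) ∧ x a + (n:ℝ) * x b = 0} with hA
  have hAclosed : ∀ n, IsClosed (A n) := by
    intro n
    have : A n = Zs d (k-1) ∩ {x | x a + (n:ℝ) * x b = 0} := by
      ext x; simp only [hA, mem_setOf_eq, Zs, mem_inter_iff]
    rw [this]
    exact (isClosed_Zs _).inter (isClosed_eq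
      ((contCoord a).add (continuous_const.mul (contCoord b))) continuous_const)
  have hAmeas : ∀ n, MeasurableSet (A n) := fun n => (hAclosed n).measurableSet
  -- coordinates via inner products
  have hcoord : ∀ (y : EuclideanSpace ℝ (Fin d)) (i : Fin d),
      y i = ⟪y, EuclideanSpace.single i (1:ℝ)⟫ := by
    intro y i
    simp [EuclideanSpace.inner_single_right]
  -- preimage computation
  have hpre : ∀ n, R n ⁻¹' (A n) = Zs d k := by
    intro n
    ext x
    simp only [mem_preimage, hA, mem_setOf_eq, Zs]
    constructor
    · rintro ⟨h1, h2⟩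
      intro i hik
      rcases Nat.lt_or_ge (i:ℕ) (k-1) with h | h
      · have := h1 i h
        rw [hcoord ((R n) x) i, inner_reflection, hRfix n i
          (by simp [ha, Fin.ext_iff]; omega) (by simp [hb, Fin.ext_iff]; omega),
          ← hcoord x i] at this
        exact this
      · -- i = a
        have hia : i = a := by rw [ha]; apply Fin.ext; simp; omega
        have key : ((R n) x) a + (n:ℝ) * ((R n) x) b = (c n)⁻¹ * x a := by
          have h0 : ⟪(R n) x, w n⟫ = x a := by
            rw [inner_reflection, hRw, hea, ← hcoord x a]
          rw [hinner_w] at h0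
          field_simp [ne_of_gt (hcpos n)] at h0 ⊢
          linarith
        rw [key] at h2
        have : x a = 0 := by
          have := hcpos n
          field_simp at h2
          simpa using h2
        rw [hia]; exact this
    · intro h
      have hxa : x a = 0 := h a (by simp [ha]; omega)
      constructor
      · intro i hik
        rw [hcoord ((R n) x) i, inner_reflection, hRfix n i
          (by simp [ha, Fin.ext_iff]; omega) (by simp [hb, Fin.ext_iff]; omega),
          ← hcoord x i]
        exact h i (by omega)
      · have key : ((R n) x) a + (n:ℝ) * ((R n) x) b = (c n)⁻¹ * x a := by
          have h0 : ⟪(R n) x, w n⟫ = x a := by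
            rw [inner_reflection, hRw, hea, ← hcoord x a]
          rw [hinner_w] at h0
          field_simp [ne_of_gt (hcpos n)] at h0 ⊢
          linarith
        rw [key, hxa, mul_zero]
  have hAeq : ∀ n, σ (A n) = σ (Zs d k) := by
    intro n
    rw [hmap (R n) (A n) (hAmeas n), hpre n]
  -- Z (k+1) ⊆ A n
  have hsub : ∀ n, Zs d (k+1) ⊆ A n := by
    intro n x hx
    have hxa : x a = 0 := hx a (by simp [ha])
    have hxb : x b = 0 := hx b (Nat.lt_succ_self k)
    exact ⟨fun i hi => hx i (by omega), by rw [hxa, hxb]; ring⟩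
  -- pairwise intersections
  have hdisj : Pairwise (Function.onFun Disjoint fun n => A n \ Zs d (k+1)) := by
    intro n m hnm
    rw [Function.onFun, Set.disjoint_left]
    rintro x ⟨hxn, hxZ⟩ ⟨hxm, _⟩
    apply hxZ
    have h1 := hxn.2
    have h2 := hxm.2
    have hnm' : (n:ℝ) ≠ (m:ℝ) := by exact_mod_cast hnm
    have hxb : x b = 0 := by
      have : ((n:ℝ) - m) * x b = 0 := by linarith
      rcases mul_eq_zero.1 this with h | h
      · exact absurd (sub_eq_zero.1 h) hnm'
      · exact h
    have hxa : x a = 0 := by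
      have := h1; rw [hxb, mul_zero, add_zero] at this; exact this
    intro i hi
    rcases Nat.lt_or_ge (i:ℕ) (k-1) with h | h
    · exact hxn.1 i h
    · rcases Nat.lt_or_ge (i:ℕ) k with h' | h'
      · have : i = a := by rw [ha]; apply Fin.ext; simp; omega
        rw [this]; exact hxa
      · have : i = b := by rw [hb]; apply Fin.ext; simp; omega
        rw [this]; exact hxb
  -- the measure argument
  have hZk1meas : MeasurableSet (Zs d (k+1)) := (isClosed_Zs _).measurableSet
  have hmono : σ (Zs d (k+1)) ≤ σ (Zs d k) := by
    apply measure_mono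
    intro x hx i hi
    exact hx i (by omega)
  by_contra hne
  have hlt : σ (Zs d (k+1)) < σ (Zs d k) := lt_of_le_of_ne hmono (fun h => hne h.symm)
  have hdiffmeas : ∀ n, MeasurableSet (A n \ Zs d (k+1)) := fun n =>
    (hAmeas n).diff hZk1meas
  have hdiffval : ∀ n : ℕ, σ (A n \ Zs d (k+1)) = σ (Zs d k) - σ (Zs d (k+1)) := by
    intro n
    rw [measure_diff (hsub n) hZk1meas.nullMeasurableSet (measure_ne_top σ _), hAeq n]
  have htop : σ (⋃ n, A n \ Zs d (k+1)) = ∞ := by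
    rw [measure_iUnion hdisj hdiffmeas]
    simp_rw [hdiffval]
    apply ENNReal.tsum_const_eq_top_of_ne_zero
    rw [← pos_iff_ne_zero]
    exact tsub_pos_of_lt hlt
  have : σ (⋃ n, A n \ Zs d (k+1)) ≤ 1 := prob_le_one
  rw [htop] at this
  exact absurd this (by simp)

lemma Zs_d_null (hd : 1 ≤ d) (σ : Measure (EuclideanSpace ℝ (Fin d)))
    (hσsphere : σ (Metric.sphere (0 : EuclideanSpace ℝ (Fin d)) 1)ᶜ = 0) :
    σ (Zs d d) = 0 := by
  apply measure_mono_null _ hσsphere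
  intro x hx
  have hx0 : x = 0 := by
    ext i
    exact hx i i.isLt
  simp [hx0]

lemma hyperplane_null (hd : 2 ≤ d) (σ : Measure (EuclideanSpace ℝ (Fin d)))
    [IsProbabilityMeasure σ]
    (hσsphere : σ (Metric.sphere (0 : EuclideanSpace ℝ (Fin d)) 1)ᶜ = 0)
    (hσinv : ∀ R : EuclideanSpace ℝ (Fin d) ≃ₗᵢ[ℝ] EuclideanSpace ℝ (Fin d),
      Measure.map R σ = σ)
    (β : EuclideanSpace ℝ (Fin d)) (hβ : ‖β‖ = 1) :
    σ {x : EuclideanSpace ℝ (Fin d) | ⟪x, β⟫ = 0} = 0 := by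
  -- first: σ (Zs d 1) = 0
  have hZ1 : σ (Zs d 1) = 0 := by
    have key : ∀ j : ℕ, j ≤ d - 1 → σ (Zs d 1) = σ (Zs d (1 + j)) := by
      intro j
      induction j with
      | zero => intro _; rfl
      | succ m ih =>
        intro hm
        rw [ih (by omega), Zs_step σ hσinv (k := 1 + m) (by omega) (by omega),
          show 1 + m + 1 = 1 + (m + 1) by omega]
    have := key (d - 1) le_rfl
    rw [show 1 + (d - 1) = d by omega] at this
    rw [this]
    exact Zs_d_null (by omega) σ hσsphere
  -- reflect β to the first basis vector
  set e0 : EuclideanSpace ℝ (Fin d) := EuclideanSpace.single ⟨0, by omega⟩ (1:ℝ) with he0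
  have hnorm : ‖e0‖ = ‖β‖ := by rw [he0, EuclideanSpace.norm_single, hβ]; simp
  set R : EuclideanSpace ℝ (Fin d) ≃ₗᵢ[ℝ] EuclideanSpace ℝ (Fin d) :=
    Submodule.reflection (ℝ ∙ (e0 - β))ᗮ with hR
  have hRe0 : R e0 = β := Submodule.reflection_sub hnorm
  have hmeas : MeasurableSet {x : EuclideanSpace ℝ (Fin d) | ⟪x, β⟫ = 0} :=
    (isClosed_eq (Continuous.inner continuous_id continuous_const) continuous_const).measurableSet
  have hmap : σ {x : EuclideanSpace ℝ (Fin d) | ⟪x, β⟫ = 0}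
      = σ (R ⁻¹' {x | ⟪x, β⟫ = 0}) := by
    conv_lhs => rw [← hσinv R]
    exact Measure.map_apply R.continuous.measurable hmeas
  have hpre : R ⁻¹' {x : EuclideanSpace ℝ (Fin d) | ⟪x, β⟫ = 0} = Zs d 1 := by
    ext x
    simp only [mem_preimage, mem_setOf_eq, Zs]
    have : ⟪R x, β⟫ = x ⟨0, by omega⟩ := by
      rw [← hRe0, hR, inner_reflection, Submodule.reflection_reflection, he0,
        EuclideanSpace.inner_single_right]
      simp
    rw [this]
    constructor
    · intro h i hi
      have : i = (⟨0, by omega⟩ : Fin d) := by apply Fin.ext; simpa using hi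
      rw [this]; exact h
    · intro h
      exact h _ (by simp)
  rw [hmap, hpre, hZ1]

end Stmt8Aux

/-- irregular identification in the binary choice RC model: the necessary
representation `∫ 1(⟨x,α⟩ ≥ 0) s(x) dν(x) = 1_B(α) − c` (η₀-a.e. on the sphere) fails
whenever `B` has an η₀-essential boundary point `β` on the sphere. -/
theorem stmt_8 {d : ℕ} (hd : 2 ≤ d)
    (σ : Measure (EuclideanSpace ℝ (Fin d))) [IsProbabilityMeasure σ]
    (hσsphere : σ (Metric.sphere (0 : EuclideanSpace ℝ (Fin d)) 1)ᶜ = 0)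
    (hσinv : ∀ R : EuclideanSpace ℝ (Fin d) ≃ₗᵢ[ℝ] EuclideanSpace ℝ (Fin d),
      Measure.map R σ = σ)
    (ν : Measure (EuclideanSpace ℝ (Fin d))) [IsFiniteMeasure ν]
    (hνσ : ν ≪ σ)
    (s : EuclideanSpace ℝ (Fin d) → ℝ) (hs : Integrable s ν)
    (η₀ : Measure (EuclideanSpace ℝ (Fin d)))
    (B : Set (EuclideanSpace ℝ (Fin d))) (hBmeas : MeasurableSet B)
    (hBsub : B ⊆ Metric.sphere (0 : EuclideanSpace ℝ (Fin d)) 1)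
    (β : EuclideanSpace ℝ (Fin d)) (hβ : β ∈ Metric.sphere (0 : EuclideanSpace ℝ (Fin d)) 1)
    (hcharge : ∀ V : Set (EuclideanSpace ℝ (Fin d)), IsOpen V → β ∈ V →
      0 < η₀ (V ∩ Metric.sphere (0 : EuclideanSpace ℝ (Fin d)) 1 ∩ B) ∧
      0 < η₀ ((V ∩ Metric.sphere (0 : EuclideanSpace ℝ (Fin d)) 1) \ B)) :
    ¬ ∃ c : ℝ, ∀ᵐ α ∂η₀, α ∈ Metric.sphere (0 : EuclideanSpace ℝ (Fin d)) 1 →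
      ∫ x, (if 0 ≤ ⟪x, α⟫ then s x else 0) ∂ν = B.indicator (fun _ => (1 : ℝ)) α - c := by
  rintro ⟨c, hc⟩
  set F : EuclideanSpace ℝ (Fin d) → ℝ :=
    fun α => ∫ x, (if 0 ≤ ⟪x, α⟫ then s x else 0) ∂ν with hF
  -- the hyperplane orthogonal to β is ν-null
  have hβnorm : ‖β‖ = 1 := by simpa using mem_sphere_zero_iff_norm.mp hβ
  have hνnull : ν {x : EuclideanSpace ℝ (Fin d) | ⟪x, β⟫ = 0} = 0 :=
    hνσ (Stmt8Aux.hyperplane_null hd σ hσsphere hσinv β hβnorm)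
  -- continuity of F at β
  have hcont : Filter.Tendsto F (nhds β) (nhds (F β)) := by
    apply MeasureTheory.tendsto_integral_filter_of_dominated_convergence
      (fun x => |s x|)
    · filter_upwards with α
      have : (fun x => if 0 ≤ ⟪x, α⟫ then s x else 0)
          = Set.indicator {x : EuclideanSpace ℝ (Fin d) | 0 ≤ ⟪x, α⟫} s := by
        ext x
        rw [Set.indicator_apply]
        rfl
      rw [this]
      exact hs.1.indicator
        (isClosed_le continuous_const
          (Continuous.inner continuous_id continuous_const)).measurableSet
    · filter_upwards with α
      filter_upwards with x
      rw [Real.norm_eq_abs]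
      split_ifs
      · exact le_refl _
      · simp [abs_nonneg]
    · exact hs.abs
    · have hne : ∀ᵐ x ∂ν, ⟪x, β⟫ ≠ 0 := by
        rw [MeasureTheory.ae_iff]
        simpa using hνnull
      filter_upwards [hne] with x hx
      have hxc : Filter.Tendsto (fun α : EuclideanSpace ℝ (Fin d) => ⟪x, α⟫)
          (nhds β) (nhds ⟪x, β⟫) :=
        ((Continuous.inner continuous_const continuous_id)).tendsto β
      rcases lt_or_gt_of_ne hx with h | h
      · have hev : ∀ᶠ α in nhds β, ⟪x, α⟫ < 0 := hxc.eventually_lt_const h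
        have heq : (fun α : EuclideanSpace ℝ (Fin d) =>
            if 0 ≤ ⟪x, α⟫ then s x else 0) =ᶠ[nhds β] fun _ => 0 := by
          filter_upwards [hev] with α hα
          rw [if_neg (not_le.mpr hα)]
        rw [show (if 0 ≤ ⟪x, β⟫ then s x else 0) = 0 from if_neg (not_le.mpr h)]
        exact Filter.Tendsto.congr' heq.symm tendsto_const_nhds
      · have hev : ∀ᶠ α in nhds β, 0 < ⟪x, α⟫ := hxc.eventually_const_lt h
        have heq : (fun α : EuclideanSpace ℝ (Fin d) =>
            if 0 ≤ ⟪x, α⟫ then s x else 0) =ᶠ[nhds β] fun _ => s x := by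
          filter_upwards [hev] with α hα
          rw [if_pos hα.le]
        rw [show (if 0 ≤ ⟪x, β⟫ then s x else 0) = s x from if_pos h.le]
        exact Filter.Tendsto.congr' heq.symm tendsto_const_nhds
  -- extract a ball on which F varies by less than 1/2
  have hev : ∀ᶠ α in nhds β, dist (F α) (F β) < 1/2 := by
    have := Metric.tendsto_nhds.mp hcont (1/2) (by norm_num)
    exact this
  rcases Metric.eventually_nhds_iff_ball.mp hev with ⟨ε, hε, hball⟩
  -- charge both sides of B near β
  obtain ⟨hpos1, hpos2⟩ := hcharge (Metric.ball β ε) Metric.isOpen_ball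
    (Metric.mem_ball_self hε)
  set G : Set (EuclideanSpace ℝ (Fin d)) :=
    {α | α ∈ Metric.sphere (0 : EuclideanSpace ℝ (Fin d)) 1 →
      F α = B.indicator (fun _ => (1 : ℝ)) α - c} with hG
  have hGc : η₀ Gᶜ = 0 := by
    rw [MeasureTheory.ae_iff] at hc
    exact hc
  have hpick : ∀ A : Set (EuclideanSpace ℝ (Fin d)), 0 < η₀ A → ∃ α ∈ A, α ∈ G := by
    intro A hA
    by_contra hno
    push_neg at hno
    have : A ⊆ Gᶜ := fun α hα => hno α hα
    have := measure_mono_null this hGc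
    rw [this] at hA
    exact lt_irrefl 0 hA
  obtain ⟨α₁, hα₁, hα₁G⟩ := hpick _ hpos1
  obtain ⟨α₂, hα₂, hα₂G⟩ := hpick _ hpos2
  have hα₁S : α₁ ∈ Metric.sphere (0 : EuclideanSpace ℝ (Fin d)) 1 := hα₁.1.2
  have hα₂S : α₂ ∈ Metric.sphere (0 : EuclideanSpace ℝ (Fin d)) 1 := hα₂.1.2
  have hF1 : F α₁ = 1 - c := by
    rw [hα₁G hα₁S, Set.indicator_of_mem hα₁.2]
  have hF2 : F α₂ = 0 - c := by
    rw [hα₂G hα₂S, Set.indicator_of_notMem hα₂.2]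
  have hd1 : dist (F α₁) (F β) < 1/2 := hball α₁ hα₁.1.1
  have hd2 : dist (F α₂) (F β) < 1/2 := hball α₂ hα₂.1.1
  have : dist (F α₁) (F α₂) ≤ dist (F α₁) (F β) + dist (F β) (F α₂) :=
    dist_triangle _ _ _
  rw [dist_comm (F β) (F α₂)] at this
  have hlt : dist (F α₁) (F α₂) < 1 := by linarith
  rw [hF1, hF2, Real.dist_eq] at hlt
  norm_num at hlt
end

section
/- Let d ≥ 2 and let σ be the rotation-invariant probability measure on the unit sphere S^{d−1} ⊆ ℝ^d. There is a constant C (one may take C = π/2, since the symmetric-difference measure equals θ/π where θ is the angle between α and α₀) such that for all α, α₀ ∈ S^{d−1}, σ( { x ∈ S^{d−1} : ⟨x,α⟩ ≥ 0 and ⟨x,α₀⟩ < 0 } ∪ { x ∈ S^{d−1} : ⟨x,α₀⟩ ≥ 0 and ⟨x,α⟩ < 0 } ) ≤ C · ‖α − α₀‖. -/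
open MeasureTheory Set
open scoped RealInnerProductSpace ENNReal

set_option linter.unusedSectionVars false

section stmt18aux

lemma stmt18_trig_id (a b t1 t2 t3 : ℝ) :
    Real.sin (t3 - t2) * (Real.cos t1 * a + Real.sin t1 * b)
      + Real.sin (t2 - t1) * (Real.cos t3 * a + Real.sin t3 * b)
      = Real.sin (t3 - t1) * (Real.cos t2 * a + Real.sin t2 * b) := by
  rw [Real.sin_sub, Real.sin_sub, Real.sin_sub]; ring

lemma stmt18_iff_chain1 {P1 P2 P3 P4 : Prop} (h12 : ¬(P1 ↔ P2)) (h34 : ¬(P3 ↔ P4))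
    (h23 : P2 ↔ P3) : P1 ↔ P4 := by tauto

lemma stmt18_iff_chain2 {P1 P2 P3 : Prop} (h12 : ¬(P1 ↔ P2)) (h23 : ¬(P2 ↔ P3)) :
    P1 ↔ P3 := by tauto

lemma stmt18_triple (a b t1 t2 t3 : ℝ) (h12 : t1 < t2) (h23 : t2 < t3)
    (hπ : t3 - t1 < Real.pi)
    (h13 : 0 ≤ Real.cos t1 * a + Real.sin t1 * b ↔ 0 ≤ Real.cos t3 * a + Real.sin t3 * b) :
    (0 ≤ Real.cos t1 * a + Real.sin t1 * b ↔ 0 ≤ Real.cos t2 * a + Real.sin t2 * b) := by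
  have key := stmt18_trig_id a b t1 t2 t3
  have s21 : 0 < Real.sin (t2 - t1) :=
    Real.sin_pos_of_pos_of_lt_pi (by linarith) (by linarith)
  have s32 : 0 < Real.sin (t3 - t2) :=
    Real.sin_pos_of_pos_of_lt_pi (by linarith) (by linarith)
  have s31 : 0 < Real.sin (t3 - t1) :=
    Real.sin_pos_of_pos_of_lt_pi (by linarith) (by linarith)
  by_cases h1 : 0 ≤ Real.cos t1 * a + Real.sin t1 * b
  · have h3 := h13.mp h1
    have : 0 ≤ Real.cos t2 * a + Real.sin t2 * b := by nlinarith
    tauto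
  · have h3 : ¬ 0 ≤ Real.cos t3 * a + Real.sin t3 * b := fun h => h1 (h13.mpr h)
    push_neg at h1 h3
    have : Real.cos t2 * a + Real.sin t2 * b < 0 := by nlinarith
    constructor
    · intro h; exact absurd h (not_le.mpr (by linarith))
    · intro h; linarith

variable {E : Type*} [NormedAddCommGroup E] [InnerProductSpace ℝ E] [CompleteSpace E]

/-- The curve `t ↦ cos t • α + sin t • β`. -/
noncomputable def stmt18gam (α β : E) (t : ℝ) : E := Real.cos t • α + Real.sin t • β

lemma stmt18_inner_gam (α β x : E) (t : ℝ) :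
    ⟪x, stmt18gam α β t⟫ = Real.cos t * ⟪x, α⟫ + Real.sin t * ⟪x, β⟫ := by
  simp [stmt18gam, inner_add_right, real_inner_smul_right]

/-- The "lune" determined by the two hemispheres at angles `t` and `t'`. -/
def stmt18lune (α β : E) (t t' : ℝ) : Set E :=
  {x ∈ Metric.sphere (0 : E) 1 |
    (0 ≤ ⟪x, stmt18gam α β t⟫ ∧ ⟪x, stmt18gam α β t'⟫ < 0) ∨
    (0 ≤ ⟪x, stmt18gam α β t'⟫ ∧ ⟪x, stmt18gam α β t⟫ < 0)}

lemma stmt18lune_measurableSet [MeasurableSpace E] [BorelSpace E] (α β : E) (t t' : ℝ) :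
    MeasurableSet (stmt18lune α β t t') := by
  have hv : ∀ v : E, Measurable fun x : E => ⟪x, v⟫ := fun v =>
    (continuous_id.inner continuous_const).measurable
  have : stmt18lune α β t t' = Metric.sphere (0 : E) 1 ∩
      (({x : E | 0 ≤ ⟪x, stmt18gam α β t⟫} ∩ {x : E | ⟪x, stmt18gam α β t'⟫ < 0}) ∪
       ({x : E | 0 ≤ ⟪x, stmt18gam α β t'⟫} ∩ {x : E | ⟪x, stmt18gam α β t⟫ < 0})) := by
    ext x
    simp only [stmt18lune, mem_sep_iff, mem_inter_iff, mem_union, mem_setOf_eq]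
  rw [this]
  exact (Metric.isClosed_sphere.measurableSet).inter
    ((((measurableSet_le measurable_const (hv _)).inter
        (measurableSet_lt (hv _) measurable_const))).union
      (((measurableSet_le measurable_const (hv _)).inter
        (measurableSet_lt (hv _) measurable_const))))

variable {α β : E} (hαα : ⟪α, α⟫ = 1) (hββ : ⟪β, β⟫ = 1) (hαβ : ⟪α, β⟫ = 0)

include hαα hββ hαβ

lemma stmt18_inner_gam_gam (s t : ℝ) :
    ⟪stmt18gam α β s, stmt18gam α β t⟫ = Real.cos (t - s) := by
  have hβα : ⟪β, α⟫ = 0 := by rw [real_inner_comm]; exact hαβ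
  rw [Real.cos_sub]
  simp only [stmt18gam, inner_add_left, inner_add_right, real_inner_smul_left,
    real_inner_smul_right, hαα, hββ, hαβ, hβα]
  ring

lemma stmt18_norm_gam (t : ℝ) : ‖stmt18gam α β t‖ = 1 := by
  have h := stmt18_inner_gam_gam hαα hββ hαβ t t
  simp only [sub_self, Real.cos_zero] at h
  have h2 : ‖stmt18gam α β t‖ ^ 2 = 1 := by rw [← real_inner_self_eq_norm_sq, h]
  nlinarith [norm_nonneg (stmt18gam α β t)]

lemma stmt18_reflection_gam (s t : ℝ) :
    Submodule.reflection (ℝ ∙ (stmt18gam α β s)) (stmt18gam α β t) = stmt18gam α β (2 * s - t) := by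
  rw [Submodule.reflection_apply, Submodule.starProjection_singleton, stmt18_norm_gam hαα hββ hαβ,
    stmt18_inner_gam_gam hαα hββ hαβ]
  have h1 : Real.cos (2 * s - t) = 2 * Real.cos (t - s) * Real.cos s - Real.cos t := by
    rw [show 2 * s - t = s - (t - s) by ring, Real.cos_sub, Real.cos_sub t s, Real.sin_sub t s]
    linear_combination (-Real.cos t) * Real.sin_sq_add_cos_sq s
  have h2 : Real.sin (2 * s - t) = 2 * Real.cos (t - s) * Real.sin s - Real.sin t := by
    rw [show 2 * s - t = s - (t - s) by ring, Real.sin_sub, Real.cos_sub t s, Real.sin_sub t s]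
    linear_combination (-Real.sin t) * Real.sin_sq_add_cos_sq s
  simp only [stmt18gam, h1, h2]
  match_scalars <;> ring

set_option maxHeartbeats 1000000 in
/-- Rotating a lune along the curve does not change its measure. -/
lemma stmt18_measure_lune [MeasurableSpace E] [BorelSpace E]
    (σ : Measure E) (hσinv : ∀ R : E ≃ₗᵢ[ℝ] E, Measure.map R σ = σ)
    (k : ℕ) (θ : ℝ) :
    σ (stmt18lune α β (k * θ) ((k + 1) * θ)) = σ (stmt18lune α β 0 θ) := by
  set R : E ≃ₗᵢ[ℝ] E :=
    (Submodule.reflection (ℝ ∙ (stmt18gam α β 0))).trans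
      (Submodule.reflection (ℝ ∙ (stmt18gam α β (k * θ / 2)))) with hRdef
  have hR : ∀ t : ℝ, R (stmt18gam α β t) = stmt18gam α β (k * θ + t) := by
    intro t
    rw [hRdef, LinearIsometryEquiv.trans_apply, stmt18_reflection_gam hαα hββ hαβ,
      stmt18_reflection_gam hαα hββ hαβ]
    rw [show 2 * (k * θ / 2) - (2 * 0 - t) = k * θ + t by ring]
  have hset : stmt18lune α β (k * θ) ((k + 1) * θ) = R.symm ⁻¹' (stmt18lune α β 0 θ) := by
    ext x
    have e1 : ⟪R.symm x, stmt18gam α β 0⟫ = ⟪x, stmt18gam α β (k * θ)⟫ := by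
      rw [← R.inner_map_map (R.symm x) (stmt18gam α β 0), R.apply_symm_apply, hR, add_zero]
    have e2 : ⟪R.symm x, stmt18gam α β θ⟫ = ⟪x, stmt18gam α β ((k + 1) * θ)⟫ := by
      rw [← R.inner_map_map (R.symm x) (stmt18gam α β θ), R.apply_symm_apply, hR,
        show (k : ℝ) * θ + θ = (k + 1) * θ by ring]
    have e3 : R.symm x ∈ Metric.sphere (0 : E) 1 ↔ x ∈ Metric.sphere (0 : E) 1 := by
      simp only [mem_sphere_zero_iff_norm, R.symm.norm_map]
    simp only [stmt18lune, mem_preimage, mem_sep_iff, e1, e2, e3]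
  rw [hset, ← Measure.map_apply (R.symm.continuous.measurable)
    (stmt18lune_measurableSet α β 0 θ), hσinv R.symm]

/-- Distinct lunes along the curve are disjoint, provided the total angle is less than `π`. -/
lemma stmt18_lune_disjoint {θ : ℝ} (hθ : 0 < θ) {j k N : ℕ} (hjk : j < k) (hkN : k < N)
    (hNθ : (N : ℝ) * θ < Real.pi) :
    Disjoint (stmt18lune α β (j * θ) ((j + 1) * θ)) (stmt18lune α β (k * θ) ((k + 1) * θ)) := by
  rw [Set.disjoint_left]
  rintro x hxj hxk
  have hgam : ∀ t : ℝ, ⟪x, stmt18gam α β t⟫ = Real.cos t * ⟪x, α⟫ + Real.sin t * ⟪x, β⟫ :=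
    fun t => stmt18_inner_gam α β x t
  have hmj : ¬ ((0 ≤ Real.cos ((j : ℝ) * θ) * ⟪x, α⟫ + Real.sin ((j : ℝ) * θ) * ⟪x, β⟫) ↔
      (0 ≤ Real.cos (((j : ℝ) + 1) * θ) * ⟪x, α⟫ + Real.sin (((j : ℝ) + 1) * θ) * ⟪x, β⟫)) := by
    rcases hxj.2 with ⟨h1, h2⟩ | ⟨h1, h2⟩ <;> rw [hgam] at h1 h2 <;> intro hiff
    · exact absurd (hiff.mp h1) (not_le.mpr h2)
    · exact absurd (hiff.mpr h1) (not_le.mpr h2)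
  have hmk : ¬ ((0 ≤ Real.cos ((k : ℝ) * θ) * ⟪x, α⟫ + Real.sin ((k : ℝ) * θ) * ⟪x, β⟫) ↔
      (0 ≤ Real.cos (((k : ℝ) + 1) * θ) * ⟪x, α⟫ + Real.sin (((k : ℝ) + 1) * θ) * ⟪x, β⟫)) := by
    rcases hxk.2 with ⟨h1, h2⟩ | ⟨h1, h2⟩ <;> rw [hgam] at h1 h2 <;> intro hiff
    · exact absurd (hiff.mp h1) (not_le.mpr h2)
    · exact absurd (hiff.mpr h1) (not_le.mpr h2)
  have hjk' : (j : ℝ) + 1 ≤ (k : ℝ) := by exact_mod_cast hjk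
  have hkN' : (k : ℝ) + 1 ≤ (N : ℝ) := by exact_mod_cast hkN
  have hjnn : (0 : ℝ) ≤ (j : ℝ) := Nat.cast_nonneg j
  have ht12 : (j : ℝ) * θ < ((j : ℝ) + 1) * θ := by nlinarith
  have ht23 : ((j : ℝ) + 1) * θ ≤ (k : ℝ) * θ := by nlinarith
  have hwin : ((k : ℝ) + 1) * θ - (j : ℝ) * θ ≤ (N : ℝ) * θ := by nlinarith
  by_cases hmid : (0 ≤ Real.cos (((j : ℝ) + 1) * θ) * ⟪x, α⟫ +
        Real.sin (((j : ℝ) + 1) * θ) * ⟪x, β⟫) ↔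
      (0 ≤ Real.cos ((k : ℝ) * θ) * ⟪x, α⟫ + Real.sin ((k : ℝ) * θ) * ⟪x, β⟫)
  · have h14 : (0 ≤ Real.cos ((j : ℝ) * θ) * ⟪x, α⟫ + Real.sin ((j : ℝ) * θ) * ⟪x, β⟫) ↔
        (0 ≤ Real.cos (((k : ℝ) + 1) * θ) * ⟪x, α⟫ + Real.sin (((k : ℝ) + 1) * θ) * ⟪x, β⟫) :=
      stmt18_iff_chain1 hmj hmk hmid
    exact hmj (stmt18_triple _ _ _ _ _ ht12 (by nlinarith) (by linarith) h14)
  · have h13 : (0 ≤ Real.cos ((j : ℝ) * θ) * ⟪x, α⟫ + Real.sin ((j : ℝ) * θ) * ⟪x, β⟫) ↔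
        (0 ≤ Real.cos ((k : ℝ) * θ) * ⟪x, α⟫ + Real.sin ((k : ℝ) * θ) * ⟪x, β⟫) :=
      stmt18_iff_chain2 hmj hmid
    have ht23' : ((j : ℝ) + 1) * θ < (k : ℝ) * θ := by
      rcases lt_or_eq_of_le ht23 with h | h
      · exact h
      · exact absurd (by rw [h]) hmid
    exact hmj (stmt18_triple _ _ _ _ _ ht12 ht23' (by linarith) h13)

end stmt18aux

set_option maxHeartbeats 2000000 in
/-- the symmetric difference of the hemispheres determined by `α` and `α₀`
has uniform spherical measure of order `‖α − α₀‖` (one may take `C = π/2`, since the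
symmetric-difference measure equals `θ/π` with `θ` the angle between `α` and `α₀`). -/
theorem stmt_18 {d : ℕ} (hd : 2 ≤ d)
    (σ : Measure (EuclideanSpace ℝ (Fin d))) [IsProbabilityMeasure σ]
    (hσsphere : σ (Metric.sphere (0 : EuclideanSpace ℝ (Fin d)) 1)ᶜ = 0)
    (hσinv : ∀ R : EuclideanSpace ℝ (Fin d) ≃ₗᵢ[ℝ] EuclideanSpace ℝ (Fin d),
      Measure.map R σ = σ) :
    ∃ C : ℝ, ∀ α ∈ Metric.sphere (0 : EuclideanSpace ℝ (Fin d)) 1,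
      ∀ α₀ ∈ Metric.sphere (0 : EuclideanSpace ℝ (Fin d)) 1,
      σ ({x ∈ Metric.sphere (0 : EuclideanSpace ℝ (Fin d)) 1 |
            0 ≤ ⟪x, α⟫ ∧ ⟪x, α₀⟫ < 0} ∪
          {x ∈ Metric.sphere (0 : EuclideanSpace ℝ (Fin d)) 1 |
            0 ≤ ⟪x, α₀⟫ ∧ ⟪x, α⟫ < 0}) ≤ ENNReal.ofReal (C * ‖α - α₀‖) := by
  refine ⟨2, ?_⟩

  intro α hα α₀ hα₀
  by_cases heq : α = α₀
  · subst heq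
    have hempty : ({x ∈ Metric.sphere (0 : EuclideanSpace ℝ (Fin d)) 1 |
            0 ≤ ⟪x, α⟫ ∧ ⟪x, α⟫ < 0} ∪
          {x ∈ Metric.sphere (0 : EuclideanSpace ℝ (Fin d)) 1 |
            0 ≤ ⟪x, α⟫ ∧ ⟪x, α⟫ < 0}) = ∅ := by
      ext x
      simp only [mem_union, mem_sep_iff, mem_empty_iff_false, iff_false]
      rintro (⟨_, h1, h2⟩ | ⟨_, h1, h2⟩) <;> linarith
    rw [hempty, measure_empty]
    exact zero_le
  by_cases hbig : (1 : ℝ) / 2 ≤ ‖α - α₀‖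
  · calc σ _ ≤ σ univ := measure_mono (subset_univ _)
      _ = 1 := measure_univ
      _ ≤ ENNReal.ofReal (2 * ‖α - α₀‖) := by
          rw [← ENNReal.ofReal_one]
          exact ENNReal.ofReal_le_ofReal (by linarith)
  push_neg at hbig
  have hα' : ‖α‖ = 1 := by rwa [mem_sphere_zero_iff_norm] at hα
  have hα₀' : ‖α₀‖ = 1 := by rwa [mem_sphere_zero_iff_norm] at hα₀
  have hαα : ⟪α, α⟫ = 1 := by rw [real_inner_self_eq_norm_sq, hα']; norm_num
  have h₀₀ : ⟪α₀, α₀⟫ = 1 := by rw [real_inner_self_eq_norm_sq, hα₀']; norm_num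
  have hpos : 0 < ‖α - α₀‖ := by rw [norm_pos_iff, sub_ne_zero]; exact heq
  set c : ℝ := ⟪α, α₀⟫ with hcdef
  have hcval : ‖α - α₀‖ ^ 2 = 2 - 2 * c := by
    rw [norm_sub_sq_real, hα', hα₀', ← hcdef]; ring
  have hc1 : c < 1 := by nlinarith
  have hc78 : 7 / 8 < c := by nlinarith
  set θ : ℝ := Real.arccos c with hθdef
  have hθpos : 0 < θ := Real.arccos_pos.mpr hc1
  have hθle : θ ≤ Real.pi / 2 := Real.arccos_le_pi_div_two.mpr (by linarith)
  have hπ3 := Real.pi_gt_three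
  have hπ4 := Real.pi_lt_d2
  have hcos : Real.cos θ = c := Real.cos_arccos (by linarith) hc1.le
  have hsinpos : 0 < Real.sin θ := Real.sin_pos_of_pos_of_lt_pi hθpos (by linarith)
  have hsinsq : Real.sin θ ^ 2 = 1 - c ^ 2 := by
    have := Real.sin_sq_add_cos_sq θ
    rw [hcos] at this; linarith
  set w : EuclideanSpace ℝ (Fin d) := α₀ - c • α with hwdef
  set β : EuclideanSpace ℝ (Fin d) := (Real.sin θ)⁻¹ • w with hβdef
  have hαw : ⟪α, w⟫ = 0 := by
    rw [hwdef, inner_sub_right, real_inner_smul_right, hαα, ← hcdef]; ring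
  have hα₀w : ⟪α₀, w⟫ = 1 - c ^ 2 := by
    have hcomm : ⟪α₀, α⟫ = c := (real_inner_comm α α₀).trans hcdef.symm
    rw [hwdef, inner_sub_right, real_inner_smul_right, h₀₀, hcomm]
    ring
  have hww : ⟪w, w⟫ = 1 - c ^ 2 := by
    rw [hwdef, inner_sub_left, real_inner_smul_left, hα₀w, hαw]; ring
  have hαβ : ⟪α, β⟫ = 0 := by rw [hβdef, real_inner_smul_right, hαw, mul_zero]
  have hββ : ⟪β, β⟫ = 1 := by
    rw [hβdef, real_inner_smul_left, real_inner_smul_right, hww, ← hsinsq]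
    field_simp
  have hγ0 : stmt18gam α β 0 = α := by simp [stmt18gam]
  have hγθ : stmt18gam α β θ = α₀ := by
    have hs : Real.sin θ • β = w := by
      rw [hβdef, smul_smul, mul_inv_cancel₀ hsinpos.ne', one_smul]
    rw [stmt18gam, hcos, hs, hwdef]
    abel
  set N : ℕ := ⌈Real.pi / θ⌉₊ - 1 with hNdef
  have hθπ2 : (2 : ℝ) ≤ Real.pi / θ := by
    rw [le_div_iff₀ hθpos]; nlinarith
  have hceil2 : 2 ≤ ⌈Real.pi / θ⌉₊ := by
    exact_mod_cast le_trans hθπ2 (Nat.le_ceil _)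
  have hN1 : 1 ≤ N := by omega
  have hNcast : (N : ℝ) = (⌈Real.pi / θ⌉₊ : ℝ) - 1 := by
    rw [hNdef, Nat.cast_sub (by omega)]; norm_num
  have hNub : (N : ℝ) * θ < Real.pi := by
    have h1 : (⌈Real.pi / θ⌉₊ : ℝ) < Real.pi / θ + 1 :=
      Nat.ceil_lt_add_one (by positivity)
    have h2 : (N : ℝ) < Real.pi / θ := by rw [hNcast]; linarith
    calc (N : ℝ) * θ < (Real.pi / θ) * θ := by nlinarith
      _ = Real.pi := by field_simp
  have hNlb : Real.pi / θ - 1 ≤ (N : ℝ) := by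
    rw [hNcast]; linarith [Nat.le_ceil (Real.pi / θ)]
  have hTset : ({x ∈ Metric.sphere (0 : EuclideanSpace ℝ (Fin d)) 1 |
            0 ≤ ⟪x, α⟫ ∧ ⟪x, α₀⟫ < 0} ∪
          {x ∈ Metric.sphere (0 : EuclideanSpace ℝ (Fin d)) 1 |
            0 ≤ ⟪x, α₀⟫ ∧ ⟪x, α⟫ < 0}) = stmt18lune α β 0 θ := by
    ext x
    simp only [stmt18lune, hγ0, hγθ, mem_union, mem_sep_iff]
    exact (and_or_left).symm
  rw [hTset]
  have hmap : ∀ k : ℕ, σ (stmt18lune α β (k * θ) ((k + 1) * θ)) = σ (stmt18lune α β 0 θ) :=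
    fun k => stmt18_measure_lune hαα hββ hαβ σ hσinv k θ
  have hdisj : (↑(Finset.range N) : Set ℕ).PairwiseDisjoint
      (fun k : ℕ => stmt18lune α β (k * θ) ((k + 1) * θ)) := by
    intro j hj k hk hjk
    simp only [Finset.coe_range, mem_Iio] at hj hk
    rcases lt_or_gt_of_ne hjk with h | h
    · exact stmt18_lune_disjoint hαα hββ hαβ hθpos h hk hNub
    · exact (stmt18_lune_disjoint hαα hββ hαβ hθpos h hj hNub).symm
  have hunion := measure_biUnion_finset (μ := σ) hdisj
    (fun k _ => stmt18lune_measurableSet α β (k * θ) ((k + 1) * θ))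
  have hsum : ∑ k ∈ Finset.range N, σ (stmt18lune α β (k * θ) ((k + 1) * θ))
      = (N : ℝ≥0∞) * σ (stmt18lune α β 0 θ) := by
    rw [Finset.sum_congr rfl (fun k _ => hmap k), Finset.sum_const, Finset.card_range,
      nsmul_eq_mul]
  have hle1 : (N : ℝ≥0∞) * σ (stmt18lune α β 0 θ) ≤ 1 := by
    rw [← hsum, ← hunion]
    calc σ _ ≤ σ univ := measure_mono (subset_univ _)
      _ = 1 := measure_univ
  have hhalf : θ / 2 - (θ / 2) ^ 3 / 4 < Real.sin (θ / 2) :=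
    by have h6 := Real.sin_gt_sub_cube (x := θ / 2) (by linarith)
       nlinarith [pow_pos (by linarith : (0 : ℝ) < θ / 2) 3]
  have hcosθ : Real.cos θ = 1 - 2 * Real.sin (θ / 2) ^ 2 := by
    have h2 := Real.cos_two_mul (θ / 2)
    rw [show 2 * (θ / 2) = θ by ring] at h2
    linear_combination h2 + 2 * Real.sin_sq_add_cos_sq (θ / 2)
  have hθsq : θ ^ 2 ≤ 4 := by nlinarith
  have hcube : θ * θ ^ 2 ≤ θ * 4 := mul_le_mul_of_nonneg_left hθsq hθpos.le
  have hsin34 : 3 / 8 * θ ≤ Real.sin (θ / 2) := by nlinarith [hhalf, hcube]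
  have hnormθ : 3 / 4 * θ ≤ ‖α - α₀‖ := by
    have hn2 : ‖α - α₀‖ ^ 2 ≥ 9 / 16 * θ ^ 2 := by nlinarith
    nlinarith
  have hNR : (1 : ℝ) ≤ (N : ℝ) * (2 * ‖α - α₀‖) := by
    have hNθlb : Real.pi - θ ≤ (N : ℝ) * θ := by
      have := mul_le_mul_of_nonneg_right hNlb hθpos.le
      calc Real.pi - θ = (Real.pi / θ - 1) * θ := by field_simp
        _ ≤ (N : ℝ) * θ := this
    have hNnn : (0 : ℝ) ≤ (N : ℝ) := Nat.cast_nonneg N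
    nlinarith [mul_nonneg hNnn (by linarith : (0 : ℝ) ≤ 2 * ‖α - α₀‖ - 3 / 2 * θ)]
  have h1 : (1 : ℝ≥0∞) ≤ (N : ℝ≥0∞) * ENNReal.ofReal (2 * ‖α - α₀‖) := by
    have h2 : ENNReal.ofReal 1 ≤ ENNReal.ofReal ((N : ℝ) * (2 * ‖α - α₀‖)) :=
      ENNReal.ofReal_le_ofReal hNR
    rwa [ENNReal.ofReal_one, ENNReal.ofReal_mul (Nat.cast_nonneg N),
      ENNReal.ofReal_natCast] at h2
  have hNne : (N : ℝ≥0∞) ≠ 0 := by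
    simp only [ne_eq, Nat.cast_eq_zero]; omega
  exact (ENNReal.mul_le_mul_iff_right hNne (ENNReal.natCast_ne_top N)).mp (le_trans hle1 h1)
end
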